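/- arXiv:2407.19049 — 15 statements merged into one kernel-verified Lean document; each statement's English description precedes it below -/
import Mathlib

section
/- For any vectors x, y in ℝ^n and any complex numbers α, β, the inequality ‖αx + βy‖₁ ≤ ((|α| + |β| + |α+β|)/2) · max{‖x‖₁, ‖y‖₁, ‖x−y‖₁} holds, where ‖·‖₁ denotes the ℓ¹-norm on ℝ^n (with x, y viewed as vectors in ℂ^n when forming αx + βy). -/
noncomputable def Pf (a b : ℝ) : ℝ := if a*b < 0 then |a| else if |b| ≤ |a| then |a-b| else 0
noncomputable def Qf (a b : ℝ) : ℝ := if a*b < 0 then |b| else if |b| ≤ |a| then 0 else |a-b|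
noncomputable def Mf (a b : ℝ) : ℝ := if a*b < 0 then 0 else min |a| |b|

lemma Pf_nonneg (a b : ℝ) : 0 ≤ Pf a b := by
  unfold Pf; split_ifs <;> positivity

lemma Qf_nonneg (a b : ℝ) : 0 ≤ Qf a b := by
  unfold Qf; split_ifs <;> positivity

lemma Mf_nonneg (a b : ℝ) : 0 ≤ Mf a b := by
  unfold Mf; split_ifs
  · exact le_refl 0
  · exact le_min (abs_nonneg a) (abs_nonneg b)

lemma PM_le (a b : ℝ) : Pf a b + Mf a b ≤ |a| := by
  unfold Pf Mf; split_ifs with h1 h2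
  · simp
  · have hmin : min |a| |b| = |b| := min_eq_right h2
    rw [hmin]
    push_neg at h1
    rcases abs_cases a with ⟨ha, _⟩ | ⟨ha, _⟩ <;>
      rcases abs_cases b with ⟨hb, _⟩ | ⟨hb, _⟩ <;>
      rcases abs_cases (a - b) with ⟨hab, _⟩ | ⟨hab, _⟩ <;> nlinarith
  · push_neg at h2
    have hmin : min |a| |b| = |a| := min_eq_left h2.le
    rw [hmin]; simp

lemma QM_le (a b : ℝ) : Qf a b + Mf a b ≤ |b| := by
  unfold Qf Mf; split_ifs with h1 h2
  · simp
  · have hmin : min |a| |b| = |b| := min_eq_right h2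
    rw [hmin]; simp
  · push_neg at h1 h2
    have hmin : min |a| |b| = |a| := min_eq_left h2.le
    rw [hmin]
    rcases abs_cases a with ⟨ha, _⟩ | ⟨ha, _⟩ <;>
      rcases abs_cases b with ⟨hb, _⟩ | ⟨hb, _⟩ <;>
      rcases abs_cases (a - b) with ⟨hab, _⟩ | ⟨hab, _⟩ <;> nlinarith

lemma PQ_le (a b : ℝ) : Pf a b + Qf a b ≤ |a - b| := by
  unfold Pf Qf; split_ifs with h1 h2
  · rcases abs_cases a with ⟨ha, _⟩ | ⟨ha, _⟩ <;>
      rcases abs_cases b with ⟨hb, _⟩ | ⟨hb, _⟩ <;>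
      rcases abs_cases (a - b) with ⟨hab, _⟩ | ⟨hab, _⟩ <;> nlinarith
  · simp
  · simp

lemma ptwise (α β : ℂ) (a b : ℝ) :
    ‖α * a + β * b‖ ≤
      ‖α‖ * Pf a b + ‖β‖ * Qf a b + ‖α + β‖ * Mf a b := by
  unfold Pf Qf Mf; split_ifs with h1 h2
  · calc ‖α * a + β * b‖ ≤ ‖α * a‖ + ‖β * b‖ :=
          norm_add_le _ _
      _ = ‖α‖ * |a| + ‖β‖ * |b| := by
          simp [norm_mul, Complex.norm_real, Real.norm_eq_abs]
      _ ≤ _ := by rw [mul_zero, add_zero]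
  · have key : α * a + β * b = α * ((a : ℂ) - b) + (α + β) * b := by ring
    have hmin : min |a| |b| = |b| := min_eq_right h2
    rw [key, hmin]
    calc ‖α * ((a:ℂ) - b) + (α + β) * b‖
        ≤ ‖α * ((a:ℂ) - b)‖ + ‖(α + β) * b‖ := norm_add_le _ _
      _ = ‖α‖ * |a - b| + ‖α + β‖ * |b| := by
          rw [norm_mul, norm_mul, ← Complex.ofReal_sub, Complex.norm_real, Complex.norm_real,
            Real.norm_eq_abs, Real.norm_eq_abs]
      _ ≤ _ := by rw [mul_zero, add_zero]
  · push_neg at h2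
    have key : α * a + β * b = β * ((b : ℂ) - a) + (α + β) * a := by ring
    have hmin : min |a| |b| = |a| := min_eq_left h2.le
    rw [key, hmin]
    calc ‖β * ((b:ℂ) - a) + (α + β) * a‖
        ≤ ‖β * ((b:ℂ) - a)‖ + ‖(α + β) * a‖ := norm_add_le _ _
      _ = ‖β‖ * |a - b| + ‖α + β‖ * |a| := by
          rw [norm_mul, norm_mul, ← Complex.ofReal_sub, Complex.norm_real, Complex.norm_real,
            Real.norm_eq_abs, Real.norm_eq_abs]
          rw [abs_sub_comm]
      _ ≤ _ := by rw [mul_zero]; linarith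

/-- For vectors `x, y ∈ ℝ^n` and complex numbers `α, β`,
`‖αx + βy‖₁ ≤ ((|α| + |β| + |α+β|)/2) · max {‖x‖₁, ‖y‖₁, ‖x−y‖₁}`. -/
theorem stmt0 (n : ℕ) (x y : Fin n → ℝ) (α β : ℂ) :
    ∑ j, ‖α * (x j : ℂ) + β * (y j : ℂ)‖ ≤
      ((‖α‖ + ‖β‖ + ‖α + β‖) / 2) *
        max (∑ j, |x j|) (max (∑ j, |y j|) (∑ j, |x j - y j|)) := by
  set u := ‖α‖ with hu
  set v := ‖β‖ with hv
  set w := ‖α + β‖ with hw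
  set A := ∑ j, |x j| with hA
  set B := ∑ j, |y j| with hB
  set C := ∑ j, |x j - y j| with hC
  set M := max A (max B C) with hM
  set P := ∑ j, Pf (x j) (y j) with hP
  set Q := ∑ j, Qf (x j) (y j) with hQ
  set m := ∑ j, Mf (x j) (y j) with hm
  have step1 : ∑ j, ‖α * (x j : ℂ) + β * (y j : ℂ)‖ ≤ u * P + v * Q + w * m := by
    rw [hP, hQ, hm, Finset.mul_sum, Finset.mul_sum, Finset.mul_sum,
      ← Finset.sum_add_distrib, ← Finset.sum_add_distrib]
    exact Finset.sum_le_sum fun j _ => ptwise α β (x j) (y j)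
  refine step1.trans ?_
  have hPM : P + m ≤ A := by
    rw [hP, hm, hA, ← Finset.sum_add_distrib]
    exact Finset.sum_le_sum fun j _ => PM_le (x j) (y j)
  have hQM : Q + m ≤ B := by
    rw [hQ, hm, hB, ← Finset.sum_add_distrib]
    exact Finset.sum_le_sum fun j _ => QM_le (x j) (y j)
  have hPQ : P + Q ≤ C := by
    rw [hP, hQ, hC, ← Finset.sum_add_distrib]
    exact Finset.sum_le_sum fun j _ => PQ_le (x j) (y j)
  have hAM : A ≤ M := le_max_left _ _
  have hBM : B ≤ M := le_trans (le_max_left _ _) (le_max_right _ _)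
  have hCM : C ≤ M := le_trans (le_max_right _ _) (le_max_right _ _)
  have t1 : u ≤ v + w := by
    have h := norm_add_le (α + β) (-β)
    simp only [add_neg_cancel_right, norm_neg] at h
    rw [hu, hv, hw]; linarith
  have t2 : v ≤ u + w := by
    have h := norm_add_le (α + β) (-α)
    simp only [norm_neg] at h
    have h2 : α + β + -α = β := by ring
    rw [h2] at h
    rw [hu, hv, hw]; linarith
  have t3 : w ≤ u + v := norm_add_le _ _
  have s1 : P + m ≤ M := hPM.trans hAM
  have s2 : Q + m ≤ M := hQM.trans hBM
  have s3 : P + Q ≤ M := hPQ.trans hCM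
  nlinarith [mul_nonneg (by linarith : (0:ℝ) ≤ v + w - u) (by linarith : (0:ℝ) ≤ M - Q - m),
    mul_nonneg (by linarith : (0:ℝ) ≤ u + w - v) (by linarith : (0:ℝ) ≤ M - P - m),
    mul_nonneg (by linarith : (0:ℝ) ≤ u + v - w) (by linarith : (0:ℝ) ≤ M - P - Q)]
end

section
/- Let ν₁ and ν₂ be finite signed (real-valued) measures on a measurable space X. Then for all complex numbers α, β: ‖αν₁ + βν₂‖ ≤ ((|α| + |β| + |α+β|)/2) · max{‖ν₁‖, ‖ν₂‖, ‖ν₁ − ν₂‖}, where ‖μ‖ = |μ|(X) is the total variation norm (with αν₁ + βν₂ a complex measure). -/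
open MeasureTheory

/-- The complex vector measure obtained from a finite signed (real) measure. -/
noncomputable def toCplx {X : Type*} [MeasurableSpace X]
    (ν : SignedMeasure X) : VectorMeasure X ℂ :=
  ν.mapRange Complex.ofRealHom.toAddMonoidHom Complex.continuous_ofReal

/-- Total variation norm of a complex measure, as the supremum of `∑ ‖μ(Eᵢ)‖` over finite
families of pairwise disjoint measurable sets. -/
noncomputable def cplxTV {X : Type*} [MeasurableSpace X] (μ : VectorMeasure X ℂ) : ℝ :=
  ⨆ P : {P : Finset (Set X) // (∀ s ∈ P, MeasurableSet s) ∧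
      (P : Set (Set X)).PairwiseDisjoint id}, ∑ s ∈ P.1, ‖μ s‖

lemma key_pointwise (α β : ℂ) (a b : ℝ) :
    ‖α * a + β * b‖ ≤
      (‖α‖ + ‖α + β‖ - ‖β‖) / 2 * |a|
      + (‖β‖ + ‖α + β‖ - ‖α‖) / 2 * |b|
      + (‖α‖ + ‖β‖ - ‖α + β‖) / 2 * |a - b| := by
  set p := ‖α‖ with hp
  set q := ‖β‖ with hq
  set r := ‖α + β‖ with hr
  have B1 : ‖α * a + β * b‖ ≤ r * |b| + p * |a - b| := by
    have h : α * (a : ℂ) + β * b = (α + β) * b + α * ((a : ℂ) - b) := by ring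
    rw [h]
    calc ‖(α + β) * b + α * ((a : ℂ) - b)‖
        ≤ ‖(α + β) * b‖ + ‖α * ((a : ℂ) - b)‖ :=
          norm_add_le _ _
      _ = r * |b| + p * |a - b| := by
          rw [norm_mul, norm_mul, ← Complex.ofReal_sub, Complex.norm_real, Real.norm_eq_abs, Complex.norm_real, Real.norm_eq_abs]
  have B2 : ‖α * a + β * b‖ ≤ r * |a| + q * |a - b| := by
    have h : α * (a : ℂ) + β * b = (α + β) * a + β * ((b : ℂ) - a) := by ring
    rw [h]
    calc ‖(α + β) * a + β * ((b : ℂ) - a)‖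
        ≤ ‖(α + β) * a‖ + ‖β * ((b : ℂ) - a)‖ :=
          norm_add_le _ _
      _ = r * |a| + q * |a - b| := by
          rw [norm_mul, norm_mul, ← Complex.ofReal_sub, Complex.norm_real, Real.norm_eq_abs, Complex.norm_real, Real.norm_eq_abs,
            abs_sub_comm]
  have B3 : ‖α * a + β * b‖ ≤ p * |a| + q * |b| := by
    calc ‖α * a + β * b‖
        ≤ ‖α * a‖ + ‖β * b‖ := norm_add_le _ _
      _ = p * |a| + q * |b| := by
          rw [norm_mul, norm_mul, Complex.norm_real, Real.norm_eq_abs, Complex.norm_real, Real.norm_eq_abs]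
  have t1 : r ≤ p + q := norm_add_le _ _
  have t2 : p ≤ r + q := by
    have h : α = (α + β) - β := by ring
    rw [hp, h]
    exact norm_sub_le _ _
  have t3 : q ≤ r + p := by
    have h : β = (β + α) - α := by ring
    rw [hq, h, add_comm β α]
    exact norm_sub_le _ _
  rcases abs_cases a with ⟨ea, sa⟩ | ⟨ea, sa⟩ <;>
    rcases abs_cases b with ⟨eb, sb⟩ | ⟨eb, sb⟩ <;>
    rcases abs_cases (a - b) with ⟨eab, sab⟩ | ⟨eab, sab⟩ <;>
    simp only [ea, eb, eab] at B1 B2 B3 ⊢ <;> linarith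

lemma sum_abs_le_tv {X : Type*} [MeasurableSpace X] (ν : SignedMeasure X)
    (P : Finset (Set X)) (hm : ∀ s ∈ P, MeasurableSet s)
    (hd : (P : Set (Set X)).PairwiseDisjoint id) :
    ∑ s ∈ P, |ν s| ≤ (ν.totalVariation Set.univ).toReal := by
  haveI : IsFiniteMeasure ν.totalVariation := inferInstanceAs (IsFiniteMeasure (_ + _))
  have step1 : ∀ s ∈ P, |ν s| ≤ (ν.totalVariation s).toReal := by
    intro s hs
    have h1 : ν s = ((ν.toJordanDecomposition.posPart).toSignedMeasure
        - (ν.toJordanDecomposition.negPart).toSignedMeasure) s := by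
      conv_lhs => rw [← ν.toSignedMeasure_toJordanDecomposition]
      rfl
    rw [h1, Measure.toSignedMeasure_sub_apply (hm s hs)]
    simp only [measureReal_def]
    have h2 : (ν.totalVariation s).toReal
        = (ν.toJordanDecomposition.posPart s).toReal
          + (ν.toJordanDecomposition.negPart s).toReal := by
      rw [SignedMeasure.totalVariation, Measure.add_apply,
        ENNReal.toReal_add (measure_ne_top _ _) (measure_ne_top _ _)]
    rw [h2]
    have n1 : (0:ℝ) ≤ (ν.toJordanDecomposition.posPart s).toReal := ENNReal.toReal_nonneg
    have n2 : (0:ℝ) ≤ (ν.toJordanDecomposition.negPart s).toReal := ENNReal.toReal_nonneg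
    rcases abs_cases ((ν.toJordanDecomposition.posPart s).toReal
      - (ν.toJordanDecomposition.negPart s).toReal) with ⟨e, _⟩ | ⟨e, _⟩ <;> rw [e] <;> linarith
  calc ∑ s ∈ P, |ν s| ≤ ∑ s ∈ P, (ν.totalVariation s).toReal := Finset.sum_le_sum step1
    _ = (∑ s ∈ P, ν.totalVariation s).toReal :=
        (ENNReal.toReal_sum fun s _ => measure_ne_top _ _).symm
    _ ≤ (ν.totalVariation Set.univ).toReal := by
        have h := measure_biUnion_finset (μ := ν.totalVariation) hd hm
        simp only [id_eq] at h
        rw [← h]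
        exact ENNReal.toReal_mono (measure_ne_top _ _) (measure_mono (Set.subset_univ _))

lemma cplxTV_nonneg {X : Type*} [MeasurableSpace X] (μ : VectorMeasure X ℂ) :
    0 ≤ cplxTV μ :=
  Real.iSup_nonneg fun P => Finset.sum_nonneg fun s _ => norm_nonneg _

lemma toCplx_apply {X : Type*} [MeasurableSpace X] (ν : SignedMeasure X) (s : Set X) :
    toCplx ν s = (ν s : ℂ) := rfl

lemma bdd_toCplx {X : Type*} [MeasurableSpace X] (ν : SignedMeasure X) :
    BddAbove (Set.range fun P : {P : Finset (Set X) // (∀ s ∈ P, MeasurableSet s) ∧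
      (P : Set (Set X)).PairwiseDisjoint id} => ∑ s ∈ P.1, ‖toCplx ν s‖) := by
  refine ⟨(ν.totalVariation Set.univ).toReal, ?_⟩
  rintro x ⟨P, rfl⟩
  dsimp only
  have : ∑ s ∈ P.1, ‖toCplx ν s‖ = ∑ s ∈ P.1, |ν s| := by
    refine Finset.sum_congr rfl fun s _ => ?_
    rw [toCplx_apply, Complex.norm_real, Real.norm_eq_abs]
  rw [this]
  exact sum_abs_le_tv ν P.1 P.2.1 P.2.2

lemma sum_le_cplxTV {X : Type*} [MeasurableSpace X] (ν : SignedMeasure X)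
    (P : {P : Finset (Set X) // (∀ s ∈ P, MeasurableSet s) ∧
      (P : Set (Set X)).PairwiseDisjoint id}) :
    ∑ s ∈ P.1, |ν s| ≤ cplxTV (toCplx ν) := by
  have h := le_ciSup (bdd_toCplx ν) P
  have e : ∑ s ∈ P.1, ‖toCplx ν s‖ = ∑ s ∈ P.1, |ν s| := by
    refine Finset.sum_congr rfl fun s _ => ?_
    rw [toCplx_apply, Complex.norm_real, Real.norm_eq_abs]
  rw [e] at h
  exact h

/-- for finite signed measures `ν₁, ν₂` and complex `α, β`,
`‖αν₁ + βν₂‖ ≤ ((|α| + |β| + |α+β|)/2) · max {‖ν₁‖, ‖ν₂‖, ‖ν₁ − ν₂‖}`. -/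
theorem stmt1 {X : Type*} [MeasurableSpace X] (ν₁ ν₂ : SignedMeasure X) (α β : ℂ) :
    cplxTV (α • toCplx ν₁ + β • toCplx ν₂) ≤
      ((‖α‖ + ‖β‖ + ‖α + β‖) / 2) *
        max (cplxTV (toCplx ν₁)) (max (cplxTV (toCplx ν₂)) (cplxTV (toCplx (ν₁ - ν₂)))) := by
  set p := ‖α‖ with hp
  set q := ‖β‖ with hq
  set r := ‖α + β‖ with hr
  set M := max (cplxTV (toCplx ν₁)) (max (cplxTV (toCplx ν₂)) (cplxTV (toCplx (ν₁ - ν₂))))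
    with hM
  have hM1 : cplxTV (toCplx ν₁) ≤ M := le_max_left _ _
  have hM2 : cplxTV (toCplx ν₂) ≤ M := le_trans (le_max_left _ _) (le_max_right _ _)
  have hM3 : cplxTV (toCplx (ν₁ - ν₂)) ≤ M := le_trans (le_max_right _ _) (le_max_right _ _)
  have hM0 : 0 ≤ M := le_trans (cplxTV_nonneg _) hM1
  have t1 : r ≤ p + q := norm_add_le _ _
  have t2 : p ≤ r + q := by
    have h : α = (α + β) - β := by ring
    rw [hp, h]
    exact norm_sub_le _ _
  have t3 : q ≤ r + p := by
    have h : β = (β + α) - α := by ring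
    rw [hq, h, add_comm β α]
    exact norm_sub_le _ _
  have hq0 : 0 ≤ q := norm_nonneg _
  have hp0 : 0 ≤ p := norm_nonneg _
  have hr0 : 0 ≤ r := norm_nonneg _
  refine Real.iSup_le (fun P => ?_) (by positivity)
  have key : ∀ s ∈ P.1, ‖(α • toCplx ν₁ + β • toCplx ν₂) s‖ ≤
      (p + r - q) / 2 * |ν₁ s| + (q + r - p) / 2 * |ν₂ s| + (p + q - r) / 2 * |(ν₁ - ν₂) s| := by
    intro s _
    have e1 : (α • toCplx ν₁ + β • toCplx ν₂) s = α * (ν₁ s : ℂ) + β * (ν₂ s : ℂ) := rfl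
    have e2 : (ν₁ - ν₂) s = ν₁ s - ν₂ s := VectorMeasure.sub_apply _ _ _
    rw [e1, e2]
    exact key_pointwise α β (ν₁ s) (ν₂ s)
  calc ∑ s ∈ P.1, ‖(α • toCplx ν₁ + β • toCplx ν₂) s‖
      ≤ ∑ s ∈ P.1, ((p + r - q) / 2 * |ν₁ s| + (q + r - p) / 2 * |ν₂ s|
          + (p + q - r) / 2 * |(ν₁ - ν₂) s|) := Finset.sum_le_sum key
    _ = (p + r - q) / 2 * (∑ s ∈ P.1, |ν₁ s|) + (q + r - p) / 2 * (∑ s ∈ P.1, |ν₂ s|)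
          + (p + q - r) / 2 * (∑ s ∈ P.1, |(ν₁ - ν₂) s|) := by
        rw [Finset.sum_add_distrib, Finset.sum_add_distrib, Finset.mul_sum, Finset.mul_sum,
          Finset.mul_sum]
    _ ≤ (p + r - q) / 2 * M + (q + r - p) / 2 * M + (p + q - r) / 2 * M := by
        gcongr
        · linarith
        · exact le_trans (sum_le_cplxTV ν₁ P) hM1
        · linarith
        · exact le_trans (sum_le_cplxTV ν₂ P) hM2
        · exact le_trans (sum_le_cplxTV (ν₁ - ν₂) P) hM3
    _ = (p + q + r) / 2 * M := by ring
end

section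
/- Let μ₁, μ₂, μ₃ be finite signed (real-valued) Borel measures on a compact Hausdorff space X, and let f : X → ℂ be continuous with sup_{x∈X} |f(x)| ≤ 1. Then there exists λ ∈ ℂ such that |∫ f dμ_j − λ| ≤ (1/2) max_{j,k} ‖μ_j − μ_k‖ for j = 1, 2, 3. -/
open MeasureTheory

/-- The complex integral of `f` against a finite signed measure `μ`, via the Jordan
decomposition `μ = μ⁺ − μ⁻`. -/
noncomputable def signedIntegral {X : Type*} [MeasurableSpace X] (f : X → ℂ)
    (μ : SignedMeasure X) : ℂ :=
  (∫ x, f x ∂μ.toJordanDecomposition.posPart) - ∫ x, f x ∂μ.toJordanDecomposition.negPart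

/-- Total variation norm of a finite signed measure. -/
noncomputable def tvNorm {X : Type*} [MeasurableSpace X] (μ : SignedMeasure X) : ℝ :=
  (μ.totalVariation Set.univ).toReal

open scoped ENNReal NNReal

section Aux

lemma between_abs {a b x : ℝ} (h1 : min a b ≤ x) (h2 : x ≤ max a b) :
    |a - x| + |x - b| = |a - b| := by
  rcases le_total a b with h | h
  · rw [min_eq_left h] at h1; rw [max_eq_right h] at h2
    rw [abs_of_nonpos (by linarith), abs_of_nonpos (by linarith), abs_of_nonpos (by linarith)]
    ring
  · rw [min_eq_right h] at h1; rw [max_eq_left h] at h2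
    rw [abs_of_nonneg (by linarith), abs_of_nonneg (by linarith), abs_of_nonneg (by linarith)]
    ring

noncomputable def med3 (a b c : ℝ) : ℝ := max (min a b) (min (max a b) c)

lemma med3_between (a b c : ℝ) :
    (min a b ≤ med3 a b c ∧ med3 a b c ≤ max a b) ∧
    (min a c ≤ med3 a b c ∧ med3 a b c ≤ max a c) ∧
    (min b c ≤ med3 a b c ∧ med3 a b c ≤ max b c) := by
  unfold med3
  rcases le_total a b with h1 | h1 <;> rcases le_total a c with h2 | h2 <;>
    rcases le_total b c with h3 | h3 <;>
    refine ⟨⟨?_, ?_⟩, ⟨?_, ?_⟩, ⟨?_, ?_⟩⟩ <;>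
    simp [min_def, max_def] <;> split_ifs <;> linarith

variable {X : Type*} [MeasurableSpace X]

lemma core (σ : Measure X) (g₀ g₁ g₂ : X → ℝ)
    (hm₀ : Measurable g₀) (hm₁ : Measurable g₁) (hm₂ : Measurable g₂)
    (hi₀ : Integrable g₀ σ) (hi₁ : Integrable g₁ σ) (hi₂ : Integrable g₂ σ)
    (hd1 : ∫ x, |g₀ x - g₂ x| ∂σ ≤ ∫ x, |g₀ x - g₁ x| ∂σ)
    (hd2 : ∫ x, |g₁ x - g₂ x| ∂σ ≤ ∫ x, |g₀ x - g₂ x| ∂σ) :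
    ∃ h : X → ℝ, Measurable h ∧ Integrable h σ ∧
      ∫ x, |g₀ x - h x| ∂σ ≤ (∫ x, |g₀ x - g₁ x| ∂σ) / 2 ∧
      ∫ x, |g₁ x - h x| ∂σ ≤ (∫ x, |g₀ x - g₁ x| ∂σ) / 2 ∧
      ∫ x, |g₂ x - h x| ∂σ ≤ (∫ x, |g₀ x - g₁ x| ∂σ) / 2 := by
  set h₀ : X → ℝ := fun x => med3 (g₀ x) (g₁ x) (g₂ x) with hh₀
  have hm : Measurable h₀ := ((hm₀.min hm₁).max ((hm₀.max hm₁).min hm₂))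
  -- pointwise betweenness
  have hb : ∀ x, (min (g₀ x) (g₁ x) ≤ h₀ x ∧ h₀ x ≤ max (g₀ x) (g₁ x)) ∧
      (min (g₀ x) (g₂ x) ≤ h₀ x ∧ h₀ x ≤ max (g₀ x) (g₂ x)) ∧
      (min (g₁ x) (g₂ x) ≤ h₀ x ∧ h₀ x ≤ max (g₁ x) (g₂ x)) :=
    fun x => med3_between _ _ _
  have hibound : Integrable (fun x => |g₀ x| + |g₁ x|) σ := hi₀.abs.add hi₁.abs
  have hih : Integrable h₀ σ := by
    refine Integrable.mono' hibound hm.aestronglyMeasurable (ae_of_all _ fun x => ?_)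
    have h1 := (hb x).1.1
    have h2 := (hb x).1.2
    rw [Real.norm_eq_abs, abs_le]
    constructor
    · calc -(|g₀ x| + |g₁ x|) ≤ min (g₀ x) (g₁ x) := by
            rcases min_cases (g₀ x) (g₁ x) with ⟨he, _⟩ | ⟨he, _⟩ <;> rw [he] <;>
              [have := abs_nonneg (g₁ x); have := abs_nonneg (g₀ x)] <;>
              [have := neg_abs_le (g₀ x); have := neg_abs_le (g₁ x)] <;> linarith
        _ ≤ h₀ x := h1
    · calc h₀ x ≤ max (g₀ x) (g₁ x) := h2
        _ ≤ |g₀ x| + |g₁ x| := by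
            rcases max_cases (g₀ x) (g₁ x) with ⟨he, _⟩ | ⟨he, _⟩ <;> rw [he] <;>
              [have := abs_nonneg (g₁ x); have := abs_nonneg (g₀ x)] <;>
              [have := le_abs_self (g₀ x); have := le_abs_self (g₁ x)] <;> linarith
  have hia : ∀ (g : X → ℝ), Integrable g σ → Integrable (fun x => |g x - h₀ x|) σ :=
    fun g hg => (hg.sub hih).abs
  -- pair sums
  have pairsum : ∀ (u v : X → ℝ), Integrable u σ → Integrable v σ →
      (∀ x, min (u x) (v x) ≤ h₀ x ∧ h₀ x ≤ max (u x) (v x)) →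
      (∫ x, |u x - h₀ x| ∂σ) + (∫ x, |v x - h₀ x| ∂σ) = ∫ x, |u x - v x| ∂σ := by
    intro u v hu hv hx
    rw [← integral_add (hia u hu) (hia v hv)]
    refine integral_congr_ae (ae_of_all _ fun x => ?_)
    have h := between_abs (hx x).1 (hx x).2
    simp only []
    rw [abs_sub_comm (v x) (h₀ x)]
    linarith [h]
  have hAB := pairsum g₀ g₁ hi₀ hi₁ (fun x => (hb x).1)
  have hAC := pairsum g₀ g₂ hi₀ hi₂ (fun x => (hb x).2.1)
  have hBC := pairsum g₁ g₂ hi₁ hi₂ (fun x => (hb x).2.2)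
  set A := ∫ x, |g₀ x - h₀ x| ∂σ with hA_def
  set B := ∫ x, |g₁ x - h₀ x| ∂σ with hB_def
  set C := ∫ x, |g₂ x - h₀ x| ∂σ with hC_def
  have hA0 : 0 ≤ A := integral_nonneg fun x => abs_nonneg _
  have hB0 : 0 ≤ B := integral_nonneg fun x => abs_nonneg _
  have hC0 : 0 ≤ C := integral_nonneg fun x => abs_nonneg _
  by_cases hA : A = 0
  · exact ⟨h₀, hm, hih, by linarith, by linarith, by linarith⟩
  · have hApos : 0 < A := lt_of_le_of_ne hA0 (Ne.symm hA)
    set t := (A - (∫ x, |g₀ x - g₁ x| ∂σ) / 2) / A with ht_def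
    have htA : t * A = A - (∫ x, |g₀ x - g₁ x| ∂σ) / 2 :=
      div_mul_cancel₀ _ (ne_of_gt hApos)
    have ht0 : 0 ≤ t := div_nonneg (by linarith) hA0
    have ht1 : t ≤ 1 := by rw [div_le_one hApos]; linarith
    set h : X → ℝ := fun x => h₀ x + t * (g₀ x - h₀ x) with hh
    have hmh : Measurable h := hm.add ((hm₀.sub hm).const_mul t)
    have hih2 : Integrable h σ := hih.add ((hi₀.sub hih).const_mul t)
    have hja : ∀ (g : X → ℝ), Integrable g σ → Integrable (fun x => |g x - h x|) σ :=
      fun g hg => (hg.sub hih2).abs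
    refine ⟨h, hmh, hih2, ?_, ?_, ?_⟩
    · have e0 : (fun x => |g₀ x - h x|) = fun x => (1 - t) * |g₀ x - h₀ x| := by
        funext x
        rw [hh]
        rw [← abs_of_nonneg (by linarith : (0:ℝ) ≤ 1 - t), ← abs_mul]
        congr 1; ring
      rw [e0, integral_const_mul]
      have he : (1 - t) * A = A - t * A := by ring
      rw [hA_def] at he
      rw [he]
      linarith
    · have e1 : (fun x => |g₁ x - h x|) ≤ fun x => |g₁ x - h₀ x| + t * |g₀ x - h₀ x| := by
        intro x
        calc |g₁ x - h x|
            = |(g₁ x - h₀ x) + -(t * (g₀ x - h₀ x))| := by rw [hh]; congr 1; ring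
          _ ≤ |g₁ x - h₀ x| + |(-(t * (g₀ x - h₀ x)))| := abs_add_le _ _
          _ = |g₁ x - h₀ x| + t * |g₀ x - h₀ x| := by
              rw [abs_neg, abs_mul, abs_of_nonneg ht0]
      have hle : ∫ x, |g₁ x - h x| ∂σ ≤ ∫ x, (|g₁ x - h₀ x| + t * |g₀ x - h₀ x|) ∂σ :=
        integral_mono (hja g₁ hi₁) ((hia g₁ hi₁).add ((hia g₀ hi₀).const_mul t)) e1
      rw [integral_add (hia g₁ hi₁) ((hia g₀ hi₀).const_mul t), integral_const_mul] at hle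
      calc ∫ x, |g₁ x - h x| ∂σ ≤ B + t * A := hle
        _ ≤ (∫ x, |g₀ x - g₁ x| ∂σ) / 2 := by linarith
    · have e2 : (fun x => |g₂ x - h x|) ≤ fun x => |g₂ x - h₀ x| + t * |g₀ x - h₀ x| := by
        intro x
        calc |g₂ x - h x|
            = |(g₂ x - h₀ x) + -(t * (g₀ x - h₀ x))| := by rw [hh]; congr 1; ring
          _ ≤ |g₂ x - h₀ x| + |(-(t * (g₀ x - h₀ x)))| := abs_add_le _ _
          _ = |g₂ x - h₀ x| + t * |g₀ x - h₀ x| := by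
              rw [abs_neg, abs_mul, abs_of_nonneg ht0]
      have hle : ∫ x, |g₂ x - h x| ∂σ ≤ ∫ x, (|g₂ x - h₀ x| + t * |g₀ x - h₀ x|) ∂σ :=
        integral_mono (hja g₂ hi₂) ((hia g₂ hi₂).add ((hia g₀ hi₀).const_mul t)) e2
      rw [integral_add (hia g₂ hi₂) ((hia g₀ hi₀).const_mul t), integral_const_mul] at hle
      calc ∫ x, |g₂ x - h x| ∂σ ≤ C + t * A := hle
        _ ≤ (∫ x, |g₀ x - g₁ x| ∂σ) / 2 := by linarith

lemma jordan_wd (σ : Measure X) {g : X → ℝ} (hgm : Measurable g) (hgi : Integrable g σ) :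
    (MeasureTheory.SignedMeasure.toJordanDecomposition (σ.withDensityᵥ g)).posPart
        = σ.withDensity (fun x => ENNReal.ofReal (g x)) ∧
      (MeasureTheory.SignedMeasure.toJordanDecomposition (σ.withDensityᵥ g)).negPart
        = σ.withDensity (fun x => ENNReal.ofReal (-g x)) := by
  haveI := isFiniteMeasure_withDensity_ofReal hgi.2
  haveI := isFiniteMeasure_withDensity_ofReal hgi.neg.2
  have hms : (σ.withDensity fun x => ENNReal.ofReal (g x))
      ⟂ₘ (σ.withDensity fun x => ENNReal.ofReal (-g x)) := by
    refine ⟨{x | g x ≤ 0}, hgm measurableSet_Iic, ?_, ?_⟩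
    · rw [withDensity_apply_eq_zero (by measurability)]
      have he : {x | ENNReal.ofReal (g x) ≠ 0} ∩ {x | g x ≤ 0} = ∅ := by
        rw [Set.eq_empty_iff_forall_notMem]
        rintro x ⟨h1, h2⟩
        exact h1 (ENNReal.ofReal_eq_zero.2 h2)
      rw [he]
      exact measure_empty
    · rw [withDensity_apply_eq_zero (by measurability)]
      have he : {x | ENNReal.ofReal (-g x) ≠ 0} ∩ {x | g x ≤ 0}ᶜ = ∅ := by
        rw [Set.eq_empty_iff_forall_notMem]
        rintro x ⟨h1, h2⟩
        simp only [Set.mem_compl_iff, Set.mem_setOf_eq, not_le] at h2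
        exact h1 (ENNReal.ofReal_eq_zero.2 (by linarith))
      rw [he]
      exact measure_empty
  have hJ : MeasureTheory.SignedMeasure.toJordanDecomposition (σ.withDensityᵥ g)
      = ⟨σ.withDensity (fun x => ENNReal.ofReal (g x)),
          σ.withDensity (fun x => ENNReal.ofReal (-g x)), hms⟩ := by
    apply MeasureTheory.SignedMeasure.toJordanDecomposition_eq
    rw [JordanDecomposition.toSignedMeasure]
    exact withDensityᵥ_eq_withDensity_pos_part_sub_withDensity_neg_part hgi
  rw [hJ]
  exact ⟨rfl, rfl⟩

lemma tv_wd (σ : Measure X) {g : X → ℝ} (hgm : Measurable g) (hgi : Integrable g σ) :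
    tvNorm (σ.withDensityᵥ g) = ∫ x, |g x| ∂σ := by
  obtain ⟨hp, hn⟩ := jordan_wd σ hgm hgi
  rw [tvNorm, MeasureTheory.SignedMeasure.totalVariation, Measure.add_apply, hp, hn,
    withDensity_apply _ MeasurableSet.univ, withDensity_apply _ MeasurableSet.univ,
    Measure.restrict_univ]
  have h1 : ∫⁻ x, ENNReal.ofReal (g x) ∂σ + ∫⁻ x, ENNReal.ofReal (-g x) ∂σ
      = ∫⁻ x, ENNReal.ofReal |g x| ∂σ := by
    rw [← lintegral_add_left (by measurability)]
    refine lintegral_congr fun x => ?_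
    rcases le_total 0 (g x) with h | h
    · rw [ENNReal.ofReal_of_nonpos (by linarith : -g x ≤ 0), add_zero, abs_of_nonneg h]
    · rw [ENNReal.ofReal_of_nonpos h, zero_add, abs_of_nonpos h]
  rw [h1, ← ofReal_integral_eq_lintegral_ofReal hgi.abs (ae_of_all _ fun x => abs_nonneg _),
    ENNReal.toReal_ofReal (integral_nonneg fun x => abs_nonneg _)]

lemma si_wd (σ : Measure X) {g : X → ℝ} (hgm : Measurable g) (hgi : Integrable g σ)
    {f : X → ℂ} (hfm : AEStronglyMeasurable f σ) (hfb : ∀ x, ‖f x‖ ≤ 1) :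
    signedIntegral f (σ.withDensityᵥ g) = ∫ x, g x • f x ∂σ := by
  obtain ⟨hp, hn⟩ := jordan_wd σ hgm hgi
  rw [signedIntegral, hp, hn]
  have key : ∀ u : X → ℝ, Measurable u →
      ∫ x, f x ∂(σ.withDensity fun x => ENNReal.ofReal (u x))
        = ∫ x, max (u x) 0 • f x ∂σ := by
    intro u hu
    have : (σ.withDensity fun x => ENNReal.ofReal (u x))
        = σ.withDensity fun x => ((u x).toNNReal : ℝ≥0∞) := rfl
    rw [this, integral_withDensity_eq_integral_smul hu.real_toNNReal f]
    refine integral_congr_ae (ae_of_all _ fun x => ?_)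
    show (u x).toNNReal • f x = (max (u x) 0) • f x
    rw [NNReal.smul_def, Real.coe_toNNReal']
  rw [key g hgm, show (∫ x, f x ∂σ.withDensity fun x => ENNReal.ofReal (-g x)) = ∫ x, max (-g x) 0 • f x ∂σ from key _ hgm.neg]
  have hint : ∀ u : X → ℝ, Measurable u → Integrable u σ →
      Integrable (fun x => max (u x) 0 • f x) σ := by
    intro u hu hui
    refine Integrable.mono' hui.abs
      (((hu.max measurable_const).aestronglyMeasurable).smul hfm) (ae_of_all _ fun x => ?_)
    rw [norm_smul, Real.norm_eq_abs]
    calc |max (u x) 0| * ‖f x‖ ≤ |u x| * 1 := by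
          refine mul_le_mul ?_ (hfb x) (norm_nonneg _) (abs_nonneg _)
          rcases le_total 0 (u x) with h | h
          · rw [max_eq_left h]
          · rw [max_eq_right h, abs_zero]
            exact abs_nonneg _
      _ = |u x| := mul_one _
  rw [← integral_sub (hint g hgm hgi) (hint (fun x => -g x) hgm.neg hgi.neg)]
  refine integral_congr_ae (ae_of_all _ fun x => ?_)
  show (max (g x) 0) • f x - (max (-g x) 0) • f x = g x • f x
  rw [← sub_smul]
  congr 1
  rcases le_total 0 (g x) with h | h
  · rw [max_eq_left h, max_eq_right (by linarith : -g x ≤ 0)]; ring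
  · rw [max_eq_right h, max_eq_left (by linarith : 0 ≤ -g x)]; ring

lemma core3 (σ : Measure X) (g₀ g₁ g₂ : X → ℝ)
    (hm₀ : Measurable g₀) (hm₁ : Measurable g₁) (hm₂ : Measurable g₂)
    (hi₀ : Integrable g₀ σ) (hi₁ : Integrable g₁ σ) (hi₂ : Integrable g₂ σ) :
    ∃ h : X → ℝ, Measurable h ∧ Integrable h σ ∧
      (∫ x, |g₀ x - h x| ∂σ
          ≤ (max (∫ x, |g₀ x - g₁ x| ∂σ)
              (max (∫ x, |g₀ x - g₂ x| ∂σ) (∫ x, |g₁ x - g₂ x| ∂σ))) / 2) ∧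
      (∫ x, |g₁ x - h x| ∂σ
          ≤ (max (∫ x, |g₀ x - g₁ x| ∂σ)
              (max (∫ x, |g₀ x - g₂ x| ∂σ) (∫ x, |g₁ x - g₂ x| ∂σ))) / 2) ∧
      (∫ x, |g₂ x - h x| ∂σ
          ≤ (max (∫ x, |g₀ x - g₁ x| ∂σ)
              (max (∫ x, |g₀ x - g₂ x| ∂σ) (∫ x, |g₁ x - g₂ x| ∂σ))) / 2) := by
  have dsymm : ∀ u v : X → ℝ, ∫ x, |u x - v x| ∂σ = ∫ x, |v x - u x| ∂σ :=
    fun u v => integral_congr_ae (ae_of_all _ fun x => abs_sub_comm _ _)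
  set d01 := ∫ x, |g₀ x - g₁ x| ∂σ with hd01
  set d02 := ∫ x, |g₀ x - g₂ x| ∂σ with hd02
  set d12 := ∫ x, |g₁ x - g₂ x| ∂σ with hd12
  have hs10 : ∫ x, |g₁ x - g₀ x| ∂σ = d01 := (dsymm g₀ g₁).symm
  have hs20 : ∫ x, |g₂ x - g₀ x| ∂σ = d02 := (dsymm g₀ g₂).symm
  have hs21 : ∫ x, |g₂ x - g₁ x| ∂σ = d12 := (dsymm g₁ g₂).symm
  have hM1 : d01 ≤ max d01 (max d02 d12) := le_max_left _ _
  have hM2 : d02 ≤ max d01 (max d02 d12) := le_trans (le_max_left _ _) (le_max_right _ _)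
  have hM3 : d12 ≤ max d01 (max d02 d12) := le_trans (le_max_right _ _) (le_max_right _ _)
  rcases le_total d01 d02 with h1 | h1 <;> rcases le_total d01 d12 with h2 | h2 <;>
    rcases le_total d02 d12 with h3 | h3
  · -- d12 max, roles (g₂,g₁,g₀)
    obtain ⟨h, hh1, hh2, b1, b2, b3⟩ := core σ g₂ g₁ g₀ hm₂ hm₁ hm₀ hi₂ hi₁ hi₀
      (by linarith) (by linarith)
    exact ⟨h, hh1, hh2, by linarith, by linarith, by linarith⟩
  · -- d02 max, d01 ≤ d12, roles (g₂,g₀,g₁)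
    obtain ⟨h, hh1, hh2, b1, b2, b3⟩ := core σ g₂ g₀ g₁ hm₂ hm₀ hm₁ hi₂ hi₀ hi₁
      (by linarith) (by linarith)
    exact ⟨h, hh1, hh2, by linarith, by linarith, by linarith⟩
  · -- all equal, roles (g₀,g₁,g₂)
    obtain ⟨h, hh1, hh2, b1, b2, b3⟩ := core σ g₀ g₁ g₂ hm₀ hm₁ hm₂ hi₀ hi₁ hi₂
      (by linarith) (by linarith)
    exact ⟨h, hh1, hh2, by linarith, by linarith, by linarith⟩
  · -- d02 max, d12 ≤ d01, roles (g₀,g₂,g₁)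
    obtain ⟨h, hh1, hh2, b1, b2, b3⟩ := core σ g₀ g₂ g₁ hm₀ hm₂ hm₁ hi₀ hi₂ hi₁
      (by linarith) (by linarith)
    exact ⟨h, hh1, hh2, by linarith, by linarith, by linarith⟩
  · -- d12 max, d02 ≤ d01, roles (g₁,g₂,g₀)
    obtain ⟨h, hh1, hh2, b1, b2, b3⟩ := core σ g₁ g₂ g₀ hm₁ hm₂ hm₀ hi₁ hi₂ hi₀
      (by linarith) (by linarith)
    exact ⟨h, hh1, hh2, by linarith, by linarith, by linarith⟩
  · -- all equal, roles (g₀,g₁,g₂)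
    obtain ⟨h, hh1, hh2, b1, b2, b3⟩ := core σ g₀ g₁ g₂ hm₀ hm₁ hm₂ hi₀ hi₁ hi₂
      (by linarith) (by linarith)
    exact ⟨h, hh1, hh2, by linarith, by linarith, by linarith⟩
  · -- d01 max, d02 ≤ d12, roles (g₁,g₀,g₂)
    obtain ⟨h, hh1, hh2, b1, b2, b3⟩ := core σ g₁ g₀ g₂ hm₁ hm₀ hm₂ hi₁ hi₀ hi₂
      (by linarith) (by linarith)
    exact ⟨h, hh1, hh2, by linarith, by linarith, by linarith⟩
  · -- d01 max, roles (g₀,g₁,g₂)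
    obtain ⟨h, hh1, hh2, b1, b2, b3⟩ := core σ g₀ g₁ g₂ hm₀ hm₁ hm₂ hi₀ hi₁ hi₂
      (by linarith) (by linarith)
    exact ⟨h, hh1, hh2, by linarith, by linarith, by linarith⟩

end Aux

/-- given three finite signed Borel measures `μ₁, μ₂, μ₃` on a compact Hausdorff
space `X` and continuous `f : X → ℂ` with `|f| ≤ 1`, there is `λ ∈ ℂ` with
`|∫ f dμⱼ − λ| ≤ (1/2) maxⱼₖ ‖μⱼ − μₖ‖` for `j = 1, 2, 3`. -/
theorem stmt2 {X : Type*} [TopologicalSpace X] [CompactSpace X] [T2Space X]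
    [MeasurableSpace X] [BorelSpace X]
    (μ : Fin 3 → SignedMeasure X) (f : C(X, ℂ)) (hf : ∀ x, ‖f x‖ ≤ 1) :
    ∃ lam : ℂ, ∀ j, ‖signedIntegral f (μ j) - lam‖ ≤
      (1 / 2) * max (tvNorm (μ 0 - μ 1)) (max (tvNorm (μ 0 - μ 2)) (tvNorm (μ 1 - μ 2))) := by
  haveI h0 : IsFiniteMeasure ((μ 0).totalVariation) := by
    rw [SignedMeasure.totalVariation]; infer_instance
  haveI h1 : IsFiniteMeasure ((μ 1).totalVariation) := by
    rw [SignedMeasure.totalVariation]; infer_instance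
  haveI h2 : IsFiniteMeasure ((μ 2).totalVariation) := by
    rw [SignedMeasure.totalVariation]; infer_instance
  set σ : Measure X := (μ 0).totalVariation + (μ 1).totalVariation + (μ 2).totalVariation
    with hσ
  haveI : IsFiniteMeasure σ := by rw [hσ]; infer_instance
  have hac : ∀ j : Fin 3, μ j ≪ᵥ σ.toENNRealVectorMeasure := by
    intro j
    rw [MeasureTheory.SignedMeasure.absolutelyContinuous_ennreal_iff,
      MeasureTheory.VectorMeasure.ennrealToMeasure_toENNRealVectorMeasure]
    refine Measure.AbsolutelyContinuous.mk fun s hs hnull => ?_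
    rw [hσ] at hnull
    simp only [Measure.coe_add, Pi.add_apply, add_eq_zero] at hnull
    fin_cases j
    · exact hnull.1.1
    · exact hnull.1.2
    · exact hnull.2
  set g : Fin 3 → X → ℝ := fun j => SignedMeasure.rnDeriv (μ j) σ with hg
  have hgm : ∀ j, Measurable (g j) := fun j => SignedMeasure.measurable_rnDeriv _ _
  have hgi : ∀ j, Integrable (g j) σ := fun j => SignedMeasure.integrable_rnDeriv _ _
  have hrep : ∀ j, σ.withDensityᵥ (g j) = μ j :=
    fun j => SignedMeasure.withDensityᵥ_rnDeriv_eq _ _ (hac j)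
  have hsub : ∀ j k : Fin 3, μ j - μ k = σ.withDensityᵥ (fun x => g j x - g k x) := by
    intro j k
    rw [withDensityᵥ_sub' (hgi j) (hgi k), hrep j, hrep k]
  have hfm : AEStronglyMeasurable (fun x => f x) σ := f.continuous.aestronglyMeasurable
  have hfb : ∀ x, ‖f x‖ ≤ 1 := fun x => by exact hf x
  have htv : ∀ j k : Fin 3, tvNorm (μ j - μ k) = ∫ x, |g j x - g k x| ∂σ := by
    intro j k
    rw [hsub j k]
    exact tv_wd σ ((hgm j).sub (hgm k)) ((hgi j).sub (hgi k))
  have hsi : ∀ j : Fin 3, signedIntegral (fun x => f x) (μ j) = ∫ x, g j x • f x ∂σ := by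
    intro j
    rw [← hrep j]
    exact si_wd σ (hgm j) (hgi j) hfm hfb
  obtain ⟨h, hmh, hih, b0, b1, b2⟩ := core3 σ (g 0) (g 1) (g 2)
    (hgm 0) (hgm 1) (hgm 2) (hgi 0) (hgi 1) (hgi 2)
  have hint : ∀ u : X → ℝ, Measurable u → Integrable u σ →
      Integrable (fun x => u x • f x) σ := by
    intro u hu hui
    refine Integrable.mono' hui.abs (hu.aestronglyMeasurable.smul hfm)
      (ae_of_all _ fun x => ?_)
    rw [norm_smul, Real.norm_eq_abs]
    calc |u x| * ‖f x‖ ≤ |u x| * 1 :=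
          mul_le_mul_of_nonneg_left (hfb x) (abs_nonneg _)
      _ = |u x| := mul_one _
  refine ⟨∫ x, h x • f x ∂σ, ?_⟩
  have key : ∀ j : Fin 3, ‖signedIntegral (fun x => f x) (μ j)
      - ∫ x, h x • f x ∂σ‖ ≤ ∫ x, |g j x - h x| ∂σ := by
    intro j
    rw [hsi j, ← integral_sub (hint (g j) (hgm j) (hgi j)) (hint h hmh hih)]
    calc ‖∫ x, (g j x • f x - h x • f x) ∂σ‖
        ≤ ∫ x, ‖g j x • f x - h x • f x‖ ∂σ := norm_integral_le_integral_norm _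
      _ ≤ ∫ x, |g j x - h x| ∂σ := by
          refine integral_mono ((hint (g j) (hgm j) (hgi j)).sub (hint h hmh hih)).norm
            ((hgi j).sub hih).abs fun x => ?_
          rw [← sub_smul, norm_smul, Real.norm_eq_abs]
          calc |g j x - h x| * ‖f x‖ ≤ |g j x - h x| * 1 :=
                mul_le_mul_of_nonneg_left (hfb x) (abs_nonneg _)
            _ = |g j x - h x| := mul_one _
  intro j
  have hgoal : (1 / 2) * max (tvNorm (μ 0 - μ 1))
      (max (tvNorm (μ 0 - μ 2)) (tvNorm (μ 1 - μ 2)))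
      = (max (∫ x, |g 0 x - g 1 x| ∂σ)
          (max (∫ x, |g 0 x - g 2 x| ∂σ) (∫ x, |g 1 x - g 2 x| ∂σ))) / 2 := by
    rw [htv 0 1, htv 0 2, htv 1 2]; ring
  rw [hgoal]
  fin_cases j
  · exact le_trans (key 0) b0
  · exact le_trans (key 1) b1
  · exact le_trans (key 2) b2
end

section
/- Let C_n = {(x,y) ∈ ℝ^n × ℝ^n : ‖x‖₁ ≤ 1, ‖y‖₁ ≤ 1, ‖x−y‖₁ ≤ 1}. If (x,y) ∈ C_n and there exist distinct indices j, k with x_j > 0, y_j > 0, x_k > 0, y_k > 0, then (x,y) is not an extreme point of C_n. -/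
/-- if `(x,y) ∈ C_n = {(x,y) : ‖x‖₁ ≤ 1, ‖y‖₁ ≤ 1, ‖x−y‖₁ ≤ 1}` and there are
distinct indices `j, k` with `x_j, y_j, x_k, y_k > 0`, then `(x,y)` is not an extreme point
of `C_n`. -/
theorem stmt3 (n : ℕ) (x y : Fin n → ℝ)
    (C : Set ((Fin n → ℝ) × (Fin n → ℝ)))
    (hC : C = {p | ∑ i, |p.1 i| ≤ 1 ∧ ∑ i, |p.2 i| ≤ 1 ∧ ∑ i, |p.1 i - p.2 i| ≤ 1})
    (hmem : (x, y) ∈ C)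
    (j k : Fin n) (hjk : j ≠ k)
    (hxj : 0 < x j) (hyj : 0 < y j) (hxk : 0 < x k) (hyk : 0 < y k) :
    (x, y) ∉ C.extremePoints ℝ := by
  subst hC
  set ε : ℝ := min (min (x j) (y j)) (min (x k) (y k)) with hε
  have hε0 : 0 < ε := by positivity
  have hεxj : ε ≤ x j := le_trans (min_le_left _ _) (min_le_left _ _)
  have hεyj : ε ≤ y j := le_trans (min_le_left _ _) (min_le_right _ _)
  have hεxk : ε ≤ x k := le_trans (min_le_right _ _) (min_le_left _ _)
  have hεyk : ε ≤ y k := le_trans (min_le_right _ _) (min_le_right _ _)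
  set d : Fin n → ℝ := fun i => if i = j then ε else if i = k then -ε else 0 with hd
  have hdsum : ∑ i, d i = 0 := by
    have : ∀ i, d i = (if i = j then ε else 0) + (if i = k then -ε else 0) := by
      intro i
      simp only [hd]
      by_cases hij : i = j
      · subst hij; simp [hjk]
      · by_cases hik : i = k <;> simp [hij, hik, Ne.symm hjk]
    rw [Finset.sum_congr rfl (fun i _ => this i)]
    rw [Finset.sum_add_distrib, Finset.sum_ite_eq' , Finset.sum_ite_eq']
    simp
  have key : ∀ (z : Fin n → ℝ), 0 < z j → ε ≤ z j → ε ≤ z k →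
      (∀ i, |z i + d i| = |z i| + d i) := by
    intro z hzj hεzj hεzk i
    simp only [hd]
    by_cases hij : i = j
    · rw [hij, if_pos rfl, abs_of_pos (show (0:ℝ) < z j + ε by linarith), abs_of_pos hzj]
    · by_cases hik : i = k
      · rw [hik, if_neg (Ne.symm hjk), if_pos rfl,
          abs_of_nonneg (show (0:ℝ) ≤ z k + -ε by linarith),
          abs_of_pos (show (0:ℝ) < z k by linarith)]
      · simp [hij, hik]
  have key' : ∀ (z : Fin n → ℝ), 0 < z k → ε ≤ z j → ε ≤ z k →
      (∀ i, |z i - d i| = |z i| - d i) := by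
    intro z hzk hεzj hεzk i
    simp only [hd]
    by_cases hij : i = j
    · rw [hij, if_pos rfl, abs_of_nonneg (show (0:ℝ) ≤ z j - ε by linarith),
        abs_of_pos (show (0:ℝ) < z j by linarith)]
    · by_cases hik : i = k
      · rw [hik, if_neg (Ne.symm hjk), if_pos rfl,
          abs_of_pos (show (0:ℝ) < z k - -ε by linarith), abs_of_pos hzk]
      · simp [hij, hik]
  have sum_add : ∀ (z : Fin n → ℝ), 0 < z j → ε ≤ z j → ε ≤ z k →
      ∑ i, |z i + d i| = ∑ i, |z i| := by
    intro z h1 h2 h3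
    rw [Finset.sum_congr rfl (fun i _ => key z h1 h2 h3 i), Finset.sum_add_distrib, hdsum,
      add_zero]
  have sum_sub : ∀ (z : Fin n → ℝ), 0 < z k → ε ≤ z j → ε ≤ z k →
      ∑ i, |z i - d i| = ∑ i, |z i| := by
    intro z h1 h2 h3
    rw [Finset.sum_congr rfl (fun i _ => key' z h1 h2 h3 i), Finset.sum_sub_distrib, hdsum,
      sub_zero]
  obtain ⟨hx1, hy1, hxy1⟩ := hmem
  intro hext
  obtain ⟨-, hE⟩ := hext
  have hamem : ((x + d, y + d) : (Fin n → ℝ) × (Fin n → ℝ)) ∈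
      {p : (Fin n → ℝ) × (Fin n → ℝ) | ∑ i, |p.1 i| ≤ 1 ∧ ∑ i, |p.2 i| ≤ 1 ∧
        ∑ i, |p.1 i - p.2 i| ≤ 1} := by
    refine ⟨?_, ?_, ?_⟩
    · simpa [sum_add x hxj hεxj hεxk] using hx1
    · simpa [sum_add y hyj hεyj hεyk] using hy1
    · simpa [show ∀ i, x i + d i - (y i + d i) = x i - y i from fun i => by ring] using hxy1
  have hbmem : ((x - d, y - d) : (Fin n → ℝ) × (Fin n → ℝ)) ∈
      {p : (Fin n → ℝ) × (Fin n → ℝ) | ∑ i, |p.1 i| ≤ 1 ∧ ∑ i, |p.2 i| ≤ 1 ∧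
        ∑ i, |p.1 i - p.2 i| ≤ 1} := by
    refine ⟨?_, ?_, ?_⟩
    · simpa [sum_sub x hxk hεxj hεxk] using hx1
    · simpa [sum_sub y hyk hεyj hεyk] using hy1
    · simpa [show ∀ i, x i - d i - (y i - d i) = x i - y i from fun i => by ring] using hxy1
  have hseg : ((x, y) : (Fin n → ℝ) × (Fin n → ℝ)) ∈
      openSegment ℝ (x + d, y + d) (x - d, y - d) := by
    refine ⟨1/2, 1/2, by norm_num, by norm_num, by norm_num, ?_⟩
    ext i <;> simp <;> ring
  have := hE hamem hbmem hseg
  have hdj : d j = 0 := by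
    have := congrArg (fun p => p.1 j) this
    simp at this
    linarith [this]
  simp [hd] at hdj
  linarith
end

section
/- Let C_n = {(x,y) ∈ ℝ^n × ℝ^n : ‖x‖₁ ≤ 1, ‖y‖₁ ≤ 1, ‖x−y‖₁ ≤ 1}. If (x,y) ∈ C_n and x has at least three non-zero coordinates, then (x,y) is not an extreme point of C_n. -/
private lemma abs_key {a t : ℝ} (ht : |t| ≤ |a|) : |a + t * Real.sign a| = |a| + t := by
  rcases lt_trichotomy a 0 with h | h | h
  · rw [Real.sign_of_neg h]
    rw [abs_of_neg h] at ht
    rcases abs_le.mp ht with ⟨h1, h2⟩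
    rw [abs_of_neg h, abs_of_nonpos (by linarith)]
    ring
  · subst h
    simp at ht
    simp [ht]
  · rw [Real.sign_of_pos h]
    rw [abs_of_pos h] at ht
    rcases abs_le.mp ht with ⟨h1, h2⟩
    rw [abs_of_pos h, abs_of_nonneg (by linarith : (0:ℝ) ≤ a + t * 1)]
    ring

private lemma sum_pert {n : ℕ} (u : Fin n → ℝ) (p q : Fin n) (hpq : p ≠ q) (t : ℝ)
    (hp : |t| ≤ |u p|) (hq : |t| ≤ |u q|) :
    ∑ i, |u i + t * (if i = p then Real.sign (u p) else
      if i = q then -Real.sign (u q) else 0)| = ∑ i, |u i| := by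
  have key : ∀ i, |u i + t * (if i = p then Real.sign (u p) else
      if i = q then -Real.sign (u q) else 0)|
      = |u i| + t * (if i = p then 1 else if i = q then -1 else 0) := by
    intro i
    by_cases h1 : i = p
    · rw [if_pos h1, if_pos h1, h1, abs_key hp, mul_one]
    · by_cases h2 : i = q
      · rw [if_neg h1, if_neg h1, if_pos h2, if_pos h2, h2]
        have e2 : u q + t * -Real.sign (u q) = u q + (-t) * Real.sign (u q) := by ring
        rw [e2, abs_key (by rwa [abs_neg])]; ring
      · simp [h1, h2]
  simp_rw [key]
  rw [Finset.sum_add_distrib]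
  have : ∑ i, t * (if i = p then (1:ℝ) else if i = q then -1 else 0) = 0 := by
    have e : ∀ i, t * (if i = p then (1:ℝ) else if i = q then -1 else 0)
        = (if i = p then t else 0) + (if i = q then -t else 0) := by
      intro i
      by_cases h1 : i = p
      · subst h1; simp [hpq]
      · by_cases h2 : i = q
        · subst h2; simp [h1, Ne.symm hpq]
        · simp [h1, h2]
    simp_rw [e]
    rw [Finset.sum_add_distrib, Finset.sum_ite_eq' Finset.univ p, Finset.sum_ite_eq' Finset.univ q]
    simp
  rw [this, add_zero]

private lemma not_extreme_of_pert {E : Type*} [AddCommGroup E] [Module ℝ E] {C : Set E}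
    {z w : E} (hw : w ≠ 0) (hp : z + w ∈ C) (hm : z - w ∈ C) :
    z ∉ C.extremePoints ℝ := by
  intro h
  have hseg : z ∈ openSegment ℝ (z + w) (z - w) := by
    refine ⟨1/2, 1/2, by norm_num, by norm_num, by norm_num, ?_⟩
    module
  have heq := (h.2 hp hm hseg)
  exact hw (by rwa [add_eq_left] at heq)

/-- if `(x,y) ∈ C_n = {(x,y) : ‖x‖₁ ≤ 1, ‖y‖₁ ≤ 1, ‖x−y‖₁ ≤ 1}` and `x` has at
least three non-zero coordinates, then `(x,y)` is not an extreme point of `C_n`. -/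
theorem stmt4 (n : ℕ) (x y : Fin n → ℝ)
    (C : Set ((Fin n → ℝ) × (Fin n → ℝ)))
    (hC : C = {p | ∑ i, |p.1 i| ≤ 1 ∧ ∑ i, |p.2 i| ≤ 1 ∧ ∑ i, |p.1 i - p.2 i| ≤ 1})
    (hmem : (x, y) ∈ C)
    (hx3 : 3 ≤ {i : Fin n | x i ≠ 0}.ncard) :
    (x, y) ∉ C.extremePoints ℝ := by
  subst hC
  obtain ⟨h1, h2, h3⟩ := hmem
  -- pigeonhole: two indices, both "good" (x i * y i > 0) or both "bad"
  set S1 : Set (Fin n) := {i | x i ≠ 0 ∧ 0 < x i * y i} with hS1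
  set S2 : Set (Fin n) := {i | x i ≠ 0 ∧ x i * y i ≤ 0} with hS2
  have hcover : {i : Fin n | x i ≠ 0} ⊆ S1 ∪ S2 := by
    intro i hi
    by_cases h : 0 < x i * y i
    · exact Or.inl ⟨hi, h⟩
    · exact Or.inr ⟨hi, le_of_not_gt h⟩
  have hle : 3 ≤ S1.ncard + S2.ncard :=
    le_trans (le_trans hx3 (Set.ncard_le_ncard hcover (Set.toFinite _)))
      (Set.ncard_union_le S1 S2)
  have hcase : 1 < S1.ncard ∨ 1 < S2.ncard := by omega
  have habs : ∀ p : Fin n, x p ≠ 0 → ∀ ε : ℝ, 0 < ε → ε ≤ |x p| → |ε| ≤ |x p| := by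
    intro p hp ε hε hle'
    rwa [abs_of_pos hε]
  rcases hcase with hc | hc
  · -- two good indices p ≠ q : use d = e
    obtain ⟨p, hpS, q, hqS, hpq⟩ := (Set.one_lt_ncard (Set.toFinite _)).mp hc
    obtain ⟨hxp, hgp⟩ := hpS
    obtain ⟨hxq, hgq⟩ := hqS
    have hyp : y p ≠ 0 := fun h => by simp [h] at hgp
    have hyq : y q ≠ 0 := fun h => by simp [h] at hgq
    have hsp : Real.sign (x p) = Real.sign (y p) := by
      rcases mul_pos_iff.mp hgp with ⟨ha, hb⟩ | ⟨ha, hb⟩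
      · rw [Real.sign_of_pos ha, Real.sign_of_pos hb]
      · rw [Real.sign_of_neg ha, Real.sign_of_neg hb]
    have hsq : Real.sign (x q) = Real.sign (y q) := by
      rcases mul_pos_iff.mp hgq with ⟨ha, hb⟩ | ⟨ha, hb⟩
      · rw [Real.sign_of_pos ha, Real.sign_of_pos hb]
      · rw [Real.sign_of_neg ha, Real.sign_of_neg hb]
    set ε : ℝ := min (min |x p| |x q|) (min |y p| |y q|) with hε
    have hεpos : 0 < ε := by
      apply lt_min (lt_min (abs_pos.mpr hxp) (abs_pos.mpr hxq))
        (lt_min (abs_pos.mpr hyp) (abs_pos.mpr hyq))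
    have hεabs : |ε| = ε := abs_of_pos hεpos
    set d : Fin n → ℝ := fun i => if i = p then Real.sign (x p) else
      if i = q then -Real.sign (x q) else 0 with hd
    set w : (Fin n → ℝ) × (Fin n → ℝ) := (fun i => ε * d i, fun i => ε * d i) with hw
    have hsum1 : ∀ t : ℝ, |t| ≤ ε → ∑ i, |x i + t * d i| = ∑ i, |x i| := by
      intro t ht
      exact sum_pert x p q hpq t
        (le_trans ht (le_trans (min_le_left _ _) (min_le_left _ _)))
        (le_trans ht (le_trans (min_le_left _ _) (min_le_right _ _)))
    have hsum2 : ∀ t : ℝ, |t| ≤ ε → ∑ i, |y i + t * d i| = ∑ i, |y i| := by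
      intro t ht
      have : d = fun i => if i = p then Real.sign (y p) else
          if i = q then -Real.sign (y q) else 0 := by
        rw [hd, hsp, hsq]
      rw [this]
      exact sum_pert y p q hpq t
        (le_trans ht (le_trans (min_le_right _ _) (min_le_left _ _)))
        (le_trans ht (le_trans (min_le_right _ _) (min_le_right _ _)))
    apply not_extreme_of_pert (w := w)
    · intro h
      have := congrFun (congrArg Prod.fst h) p
      simp only [hw, hd, if_pos rfl, Prod.fst_zero, Pi.zero_apply] at this
      rcases mul_eq_zero.mp this with h' | h'
      · exact hεpos.ne' h'
      · exact hxp (Real.sign_eq_zero_iff.mp h')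
    · refine ⟨?_, ?_, ?_⟩
      · show ∑ i, |x i + ε * d i| ≤ 1
        rw [hsum1 ε (le_of_eq hεabs)]; exact h1
      · show ∑ i, |y i + ε * d i| ≤ 1
        rw [hsum2 ε (le_of_eq hεabs)]; exact h2
      · show ∑ i, |x i + ε * d i - (y i + ε * d i)| ≤ 1
        have : ∀ i, x i + ε * d i - (y i + ε * d i) = x i - y i := fun i => by ring
        simp_rw [this]; exact h3
    · refine ⟨?_, ?_, ?_⟩
      · show ∑ i, |x i - ε * d i| ≤ 1
        have e : ∀ i, x i - ε * d i = x i + (-ε) * d i := fun i => by ring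
        simp_rw [e]
        rw [hsum1 (-ε) (by rw [abs_neg, hεabs])]; exact h1
      · show ∑ i, |y i - ε * d i| ≤ 1
        have e : ∀ i, y i - ε * d i = y i + (-ε) * d i := fun i => by ring
        simp_rw [e]
        rw [hsum2 (-ε) (by rw [abs_neg, hεabs])]; exact h2
      · show ∑ i, |x i - ε * d i - (y i - ε * d i)| ≤ 1
        have : ∀ i, x i - ε * d i - (y i - ε * d i) = x i - y i := fun i => by ring
        simp_rw [this]; exact h3
  · -- two bad indices p ≠ q : use e = 0
    obtain ⟨p, hpS, q, hqS, hpq⟩ := (Set.one_lt_ncard (Set.toFinite _)).mp hc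
    obtain ⟨hxp, hgp⟩ := hpS
    obtain ⟨hxq, hgq⟩ := hqS
    -- sign (x i - y i) = sign (x i) and |x i| ≤ |x i - y i| for bad i
    have hkey : ∀ i : Fin n, x i ≠ 0 → x i * y i ≤ 0 →
        Real.sign (x i - y i) = Real.sign (x i) ∧ |x i| ≤ |x i - y i| := by
      intro i hxi hgi
      rcases hxi.lt_or_gt with h | h
      · have hy : 0 ≤ y i := by
          by_contra hy
          push_neg at hy
          nlinarith
        have : x i - y i < 0 := by linarith
        refine ⟨by rw [Real.sign_of_neg this, Real.sign_of_neg h], ?_⟩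
        rw [abs_of_neg h, abs_of_neg this]; linarith
      · have hy : y i ≤ 0 := by
          by_contra hy
          push_neg at hy
          nlinarith
        have : 0 < x i - y i := by linarith
        refine ⟨by rw [Real.sign_of_pos this, Real.sign_of_pos h], ?_⟩
        rw [abs_of_pos h, abs_of_pos this]; linarith
    obtain ⟨hsp, hmp⟩ := hkey p hxp hgp
    obtain ⟨hsq, hmq⟩ := hkey q hxq hgq
    set ε : ℝ := min |x p| |x q| with hε
    have hεpos : 0 < ε := lt_min (abs_pos.mpr hxp) (abs_pos.mpr hxq)
    have hεabs : |ε| = ε := abs_of_pos hεpos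
    set d : Fin n → ℝ := fun i => if i = p then Real.sign (x p) else
      if i = q then -Real.sign (x q) else 0 with hd
    set w : (Fin n → ℝ) × (Fin n → ℝ) := (fun i => ε * d i, fun _ => (0:ℝ)) with hw
    have hsum1 : ∀ t : ℝ, |t| ≤ ε → ∑ i, |x i + t * d i| = ∑ i, |x i| := by
      intro t ht
      exact sum_pert x p q hpq t (le_trans ht (min_le_left _ _))
        (le_trans ht (min_le_right _ _))
    have hsum3 : ∀ t : ℝ, |t| ≤ ε →
        ∑ i, |x i - y i + t * d i| = ∑ i, |x i - y i| := by
      intro t ht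
      have hdd : d = fun i => if i = p then Real.sign ((fun j => x j - y j) p) else
          if i = q then -Real.sign ((fun j => x j - y j) q) else 0 := by
        rw [hd]; simp only []; rw [hsp, hsq]
      rw [hdd]
      exact sum_pert (fun j => x j - y j) p q hpq t
        (le_trans (le_trans ht (min_le_left _ _)) hmp)
        (le_trans (le_trans ht (min_le_right _ _)) hmq)
    apply not_extreme_of_pert (w := w)
    · intro h
      have := congrFun (congrArg Prod.fst h) p
      simp only [hw, hd, if_pos rfl, Prod.fst_zero, Pi.zero_apply] at this
      rcases mul_eq_zero.mp this with h' | h'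
      · exact hεpos.ne' h'
      · exact hxp (Real.sign_eq_zero_iff.mp h')
    · refine ⟨?_, ?_, ?_⟩
      · show ∑ i, |x i + ε * d i| ≤ 1
        rw [hsum1 ε (le_of_eq hεabs)]; exact h1
      · show ∑ i, |y i + 0| ≤ 1
        simp_rw [add_zero]; exact h2
      · show ∑ i, |x i + ε * d i - (y i + 0)| ≤ 1
        have e : ∀ i, x i + ε * d i - (y i + 0) = x i - y i + ε * d i := fun i => by ring
        simp_rw [e]
        rw [hsum3 ε (le_of_eq hεabs)]; exact h3
    · refine ⟨?_, ?_, ?_⟩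
      · show ∑ i, |x i - ε * d i| ≤ 1
        have e : ∀ i, x i - ε * d i = x i + (-ε) * d i := fun i => by ring
        simp_rw [e]
        rw [hsum1 (-ε) (by rw [abs_neg, hεabs])]; exact h1
      · show ∑ i, |y i - 0| ≤ 1
        simp_rw [sub_zero]; exact h2
      · show ∑ i, |x i - ε * d i - (y i - 0)| ≤ 1
        have e : ∀ i, x i - ε * d i - (y i - 0) = x i - y i + (-ε) * d i := fun i => by ring
        simp_rw [e]
        rw [hsum3 (-ε) (by rw [abs_neg, hεabs])]; exact h3
end

section
/- Let K ⊆ ℂ be compact with at least two points, and let D be the (unique) closed disk of minimal radius containing K. Then K ∩ ∂D is not contained in any open arc of ∂D of length strictly smaller than half the circumference of D. Equivalently: K ∩ ∂D is not contained in any open half-plane whose boundary line passes through the center of D. -/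
/-- if `D = closedBall c r` is the minimal closed disk containing a compact set
`K ⊆ ℂ` with at least two points, then `K ∩ ∂D` is not contained in any open half-plane whose
boundary line passes through the center `c`: there is no unit vector `u` with
`Re((z − c)·conj u) > 0` for all `z ∈ K ∩ ∂D`. -/
theorem stmt7 (K : Set ℂ) (hK : IsCompact K) (hK2 : ∃ a ∈ K, ∃ b ∈ K, a ≠ b)
    (c : ℂ) (r : ℝ) (hsub : K ⊆ Metric.closedBall c r)
    (hmin : ∀ (c' : ℂ) (r' : ℝ), K ⊆ Metric.closedBall c' r' → r ≤ r') :
    ¬ ∃ u : ℂ, ‖u‖ = 1 ∧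
      ∀ z ∈ K ∩ Metric.sphere c r, 0 < ((z - c) * (starRingEnd ℂ) u).re := by
  rintro ⟨u, hu, hpos⟩
  obtain ⟨a, ha, -⟩ := hK2
  have hKne : K.Nonempty := ⟨a, ha⟩
  -- For each n, minimality gives a point of K at distance ≥ r from the shifted center.
  have key : ∀ n : ℕ, ∃ z ∈ K, r ≤ dist z (c + ((1 / (n + 1) : ℝ) : ℂ) * u) := by
    intro n
    by_contra h
    push_neg at h
    obtain ⟨z0, hz0K, hz0max⟩ := hK.exists_isMaxOn hKne
      (Continuous.continuousOn (by continuity :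
        Continuous fun z : ℂ => dist z (c + ((1 / (n + 1) : ℝ) : ℂ) * u)))
    have h1 : K ⊆ Metric.closedBall (c + ((1 / (n + 1) : ℝ) : ℂ) * u)
        (dist z0 (c + ((1 / (n + 1) : ℝ) : ℂ) * u)) := fun z hz => hz0max hz
    exact absurd (hmin _ _ h1) (not_le.mpr (h z0 hz0K))
  choose z hzK hzd using key
  obtain ⟨x, hxK, φ, hφ, hlim⟩ := hK.tendsto_subseq hzK
  have hεpos : ∀ n : ℕ, (0 : ℝ) < 1 / (n + 1) := fun n => by positivity
  have hε0 : Filter.Tendsto (fun n : ℕ => (1 : ℝ) / (n + 1)) Filter.atTop (nhds 0) :=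
    tendsto_one_div_add_atTop_nhds_zero_nat
  -- Key inequality: Re((z n - c) * conj u) ≤ ε n / 2.
  have hre : ∀ n : ℕ, ((z n - c) * (starRingEnd ℂ) u).re ≤ (1 / (n + 1)) / 2 := by
    intro n
    set ε : ℝ := 1 / (n + 1) with hεdef
    have h1 : r ≤ ‖z n - (c + (ε : ℂ) * u)‖ := by
      have := hzd n
      rwa [Complex.dist_eq] at this
    have h2 : ‖z n - c‖ ≤ r := by
      simpa [Complex.dist_eq] using hsub (hzK n)
    have h3 : Complex.normSq (z n - c) ≤ r ^ 2 := by
      have := Complex.sq_norm (z n - c)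
      nlinarith [norm_nonneg (z n - c)]
    have hr0 : 0 ≤ r := le_trans (norm_nonneg _) h2
    have h4 : r ^ 2 ≤ Complex.normSq (z n - (c + (ε : ℂ) * u)) := by
      have := Complex.sq_norm (z n - (c + (ε : ℂ) * u))
      nlinarith [norm_nonneg (z n - (c + (ε : ℂ) * u)), h1, hr0]
    have hnu : Complex.normSq u = 1 := by
      have := Complex.sq_norm u
      rw [hu] at this; simpa using this.symm
    have hexp : Complex.normSq (z n - (c + (ε : ℂ) * u)) =
        Complex.normSq (z n - c) - 2 * ε * ((z n - c) * (starRingEnd ℂ) u).re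
          + ε ^ 2 * Complex.normSq u := by
      simp [Complex.normSq_apply, Complex.mul_re, Complex.mul_im, Complex.sub_re,
        Complex.sub_im, Complex.add_re, Complex.add_im, Complex.conj_re, Complex.conj_im,
        Complex.ofReal_re, Complex.ofReal_im]
      ring
    rw [hexp, hnu] at h4
    nlinarith [hεpos n]
  -- The subsequence limit x lies on the sphere.
  have hcc : Filter.Tendsto (fun n : ℕ => c + ((1 / (φ n + 1) : ℝ) : ℂ) * u)
      Filter.atTop (nhds c) := by
    have hεφ : Filter.Tendsto (fun n : ℕ => (1 : ℝ) / (φ n + 1)) Filter.atTop (nhds 0) :=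
      hε0.comp hφ.tendsto_atTop
    have : Filter.Tendsto (fun n : ℕ => ((1 / (φ n + 1) : ℝ) : ℂ) * u)
        Filter.atTop (nhds 0) := by
      have := (Complex.continuous_ofReal.tendsto 0).comp hεφ
      simpa using this.mul_const u
    simpa using tendsto_const_nhds.add this
  have hdist : Filter.Tendsto
      (fun n : ℕ => dist (z (φ n)) (c + ((1 / (φ n + 1) : ℝ) : ℂ) * u))
      Filter.atTop (nhds (dist x c)) :=
    hlim.dist hcc
  have hxr : r ≤ dist x c :=
    le_of_tendsto_of_tendsto' tendsto_const_nhds hdist (fun n => hzd (φ n))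
  have hxsphere : x ∈ Metric.sphere c r := by
    have h := hsub hxK
    rw [Metric.mem_closedBall] at h
    exact Metric.mem_sphere.mpr (le_antisymm h hxr)
  -- Pass to the limit in the Re inequality.
  have hrelim : Filter.Tendsto (fun n : ℕ => ((z (φ n) - c) * (starRingEnd ℂ) u).re)
      Filter.atTop (nhds (((x - c) * (starRingEnd ℂ) u).re)) := by
    have : Filter.Tendsto (fun n : ℕ => (z (φ n) - c) * (starRingEnd ℂ) u)
        Filter.atTop (nhds ((x - c) * (starRingEnd ℂ) u)) :=
      ((hlim.sub tendsto_const_nhds).mul tendsto_const_nhds)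
    exact (Complex.continuous_re.tendsto _).comp this
  have hε2 : Filter.Tendsto (fun n : ℕ => (1 / (φ n + 1) : ℝ) / 2)
      Filter.atTop (nhds 0) := by
    have := (hε0.comp hφ.tendsto_atTop).div_const 2
    simpa using this
  have hfinal : ((x - c) * (starRingEnd ℂ) u).re ≤ 0 :=
    le_of_tendsto_of_tendsto' hrelim hε2 (fun n => hre (φ n))
  exact absurd (hpos x ⟨hxK, hxsphere⟩) (not_lt.mpr hfinal)
end

section
/- Let K ⊆ ℂ be compact with at least two points, D its minimal enclosing closed disk with center c. If K ∩ ∂D = {a, b} consists of exactly two points, then a and b are antipodal, i.e., a + b = 2c. -/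
set_option maxHeartbeats 1000000

private lemma distsq (x y : ℂ) :
    dist x y ^ 2 = (x.re - y.re) ^ 2 + (x.im - y.im) ^ 2 := by
  rw [Complex.dist_eq, Complex.sq_norm, Complex.normSq_apply]
  simp [Complex.sub_re, Complex.sub_im]
  ring

private lemma normsq (z : ℂ) : ‖z‖ ^ 2 = z.re ^ 2 + z.im ^ 2 := by
  rw [Complex.sq_norm, Complex.normSq_apply]
  ring

/-- if the minimal enclosing disk `closedBall c r` of a compact set `K ⊆ ℂ` with
at least two points meets `K` on its boundary circle in exactly two points `a, b`, then `a`
and `b` are antipodal: `a + b = 2c`. -/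
theorem stmt8 (K : Set ℂ) (hK : IsCompact K) (hK2 : ∃ a ∈ K, ∃ b ∈ K, a ≠ b)
    (c : ℂ) (r : ℝ) (hsub : K ⊆ Metric.closedBall c r)
    (hmin : ∀ (c' : ℂ) (r' : ℝ), K ⊆ Metric.closedBall c' r' → r ≤ r')
    (a b : ℂ) (hab : a ≠ b) (hbd : K ∩ Metric.sphere c r = {a, b}) :
    a + b = 2 * c := by
  by_contra hne
  have haM : a ∈ K ∩ Metric.sphere c r := by rw [hbd]; simp
  have hbM : b ∈ K ∩ Metric.sphere c r := by rw [hbd]; simp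
  have haK : a ∈ K := haM.1
  have hbK : b ∈ K := hbM.1
  have haS : dist a c = r := haM.2
  have hbS : dist b c = r := hbM.2
  have hr0 : 0 < r := by
    rcases lt_or_eq_of_le (dist_nonneg.trans_eq haS) with h | h
    · exact h
    · exfalso
      apply hab
      have ha : a = c := by rw [← dist_eq_zero, haS, ← h]
      have hb : b = c := by rw [← dist_eq_zero, hbS, ← h]
      rw [ha, hb]
  obtain ⟨v, hv_def⟩ : ∃ v : ℂ, v = a + b - 2 * c := ⟨_, rfl⟩
  have hv : v ≠ 0 := by
    rw [hv_def]
    intro h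
    exact hne (by linear_combination h)
  have hnv : 0 < ‖v‖ := norm_pos_iff.2 hv
  obtain ⟨f, hf_def⟩ : ∃ f : ℂ → ℝ, f = fun x => (x - c).re * v.re + (x - c).im * v.im :=
    ⟨_, rfl⟩
  have hfcont : Continuous f := by
    rw [hf_def]
    apply Continuous.add
    · exact ((Complex.continuous_re.comp (continuous_id.sub continuous_const)).mul continuous_const)
    · exact ((Complex.continuous_im.comp (continuous_id.sub continuous_const)).mul continuous_const)
  obtain ⟨δ, hδ_def⟩ : ∃ δ : ℝ, δ = ‖v‖ ^ 2 / 2 := ⟨_, rfl⟩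
  have hδ0 : 0 < δ := by rw [hδ_def]; positivity
  -- key: f a = f b = δ
  have haS2 : (a.re - c.re) ^ 2 + (a.im - c.im) ^ 2 = r ^ 2 := by
    rw [← distsq, haS]
  have hbS2 : (b.re - c.re) ^ 2 + (b.im - c.im) ^ 2 = r ^ 2 := by
    rw [← distsq, hbS]
  have hvre : v.re = (a.re - c.re) + (b.re - c.re) := by
    rw [hv_def]; simp [Complex.add_re, Complex.sub_re, Complex.mul_re]; ring
  have hvim : v.im = (a.im - c.im) + (b.im - c.im) := by
    rw [hv_def]; simp [Complex.add_im, Complex.sub_im, Complex.mul_im]; ring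
  have hfa : f a = δ := by
    simp only [hf_def, hδ_def, normsq, Complex.sub_re, Complex.sub_im, hvre, hvim]
    nlinarith [haS2, hbS2]
  have hfb : f b = δ := by
    simp only [hf_def, hδ_def, normsq, Complex.sub_re, Complex.sub_im, hvre, hvim]
    nlinarith [haS2, hbS2]
  -- r₁ bound on the "small f" part of K
  obtain ⟨r₁, hr₁lt, hr₁⟩ : ∃ r₁, r₁ < r ∧ ∀ x ∈ K, f x ≤ δ / 2 → dist x c ≤ r₁ := by
    by_cases hA : (K ∩ {x | f x ≤ δ / 2}).Nonempty
    · have hAc : IsCompact (K ∩ {x | f x ≤ δ / 2}) :=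
        hK.inter_right (isClosed_le hfcont continuous_const)
      obtain ⟨x₁, hx₁, hmax⟩ := hAc.exists_isMaxOn hA
        ((continuous_id.dist continuous_const).continuousOn :
          ContinuousOn (fun x => dist x c) (K ∩ {x | f x ≤ δ / 2}))
      refine ⟨dist x₁ c, ?_, fun x hx hfx => hmax ⟨hx, hfx⟩⟩
      rcases lt_or_eq_of_le (Metric.mem_closedBall.1 (hsub hx₁.1)) with h | h
      · exact h
      · exfalso
        have : x₁ ∈ K ∩ Metric.sphere c r := ⟨hx₁.1, h⟩
        rw [hbd] at this
        simp only [Set.mem_insert_iff, Set.mem_singleton_iff] at this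
        have hf2 : f x₁ ≤ δ / 2 := hx₁.2
        rcases this with h1 | h1 <;> rw [h1] at hf2
        · rw [hfa] at hf2; linarith
        · rw [hfb] at hf2; linarith
    · exact ⟨r / 2, by linarith, fun x hx hfx => absurd ⟨x, hx, hfx⟩ hA⟩
  -- choose the shift size t
  obtain ⟨t, ht0, ht1, ht2⟩ :
      ∃ t : ℝ, 0 < t ∧ t * ‖v‖ ≤ (r - r₁) / 2 ∧ t * (2 * ‖v‖ ^ 2) ≤ δ := by
    refine ⟨min ((r - r₁) / (2 * ‖v‖)) (δ / (2 * ‖v‖ ^ 2)), ?_, ?_, ?_⟩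
    · exact lt_min (div_pos (by linarith) (by positivity)) (by positivity)
    · calc min ((r - r₁) / (2 * ‖v‖)) (δ / (2 * ‖v‖ ^ 2)) * ‖v‖
          ≤ (r - r₁) / (2 * ‖v‖) * ‖v‖ :=
            mul_le_mul_of_nonneg_right (min_le_left _ _) (norm_nonneg _)
        _ = (r - r₁) / 2 := by
            rw [div_mul_eq_mul_div, mul_comm (2:ℝ) ‖v‖, ← div_div, mul_div_assoc,
              div_self hnv.ne', mul_one]
    · exact (le_div_iff₀ (by positivity)).1 (min_le_right _ _)
  obtain ⟨c', hc'_def⟩ : ∃ c' : ℂ, c' = c + (t : ℂ) * v := ⟨_, rfl⟩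
  obtain ⟨x₀, hx₀K, hx₀max⟩ := hK.exists_isMaxOn ⟨a, haK⟩
    ((continuous_id.dist continuous_const).continuousOn : ContinuousOn (fun x => dist x c') K)
  have hRr : r ≤ dist x₀ c' :=
    hmin c' (dist x₀ c') (fun x hx => Metric.mem_closedBall.2 (hx₀max hx))
  have hdcc' : dist c c' = t * ‖v‖ := by
    rw [hc'_def, dist_self_add_right, norm_mul, Complex.norm_real,
      Real.norm_eq_abs, abs_of_pos ht0]
  by_cases hcase : f x₀ ≤ δ / 2
  · -- x₀ is in the small-f region
    have h1 : dist x₀ c ≤ r₁ := hr₁ x₀ hx₀K hcase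
    have h2 : dist x₀ c' ≤ dist x₀ c + dist c c' := dist_triangle _ _ _
    have h3 : t * ‖v‖ ≤ (r - r₁) / 2 := ht1
    rw [hdcc'] at h2
    linarith
  · push_neg at hcase
    have htv : t * (2 * ‖v‖ ^ 2) ≤ δ := ht2
    have hd2 : dist x₀ c ^ 2 ≤ r ^ 2 :=
      pow_le_pow_left₀ dist_nonneg (Metric.mem_closedBall.1 (hsub hx₀K)) 2
    have he : dist x₀ c' ^ 2 = dist x₀ c ^ 2 - 2 * t * f x₀ + t ^ 2 * ‖v‖ ^ 2 := by
      rw [distsq, distsq, normsq]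
      have e1 : c'.re = c.re + t * v.re := by
        rw [hc'_def]
        simp [Complex.add_re, Complex.mul_re, Complex.ofReal_re, Complex.ofReal_im]
      have e2 : c'.im = c.im + t * v.im := by
        rw [hc'_def]
        simp [Complex.add_im, Complex.mul_im, Complex.ofReal_re, Complex.ofReal_im]
      rw [e1, e2]
      simp only [hf_def, Complex.sub_re, Complex.sub_im]
      ring
    have hRnn : 0 ≤ dist x₀ c' := dist_nonneg
    have k1 : t * (δ / 2) < t * f x₀ := mul_lt_mul_of_pos_left hcase ht0
    have k2 : t * (2 * ‖v‖ ^ 2) * t ≤ δ * t := mul_le_mul_of_nonneg_right ht2 ht0.le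
    have k3 : r * r ≤ dist x₀ c' * dist x₀ c' := mul_le_mul hRr hRr hr0.le hRnn
    nlinarith [k1, k2, k3, mul_pos ht0 hδ0]
end

section
/- Let K ⊆ ℂ be compact containing at least two points. Then there exists a subset T ⊆ K with at most three points whose minimal enclosing disk equals the minimal enclosing disk of K; in particular the minimal enclosing radius of T equals that of K. -/
open Metric

/-- Helly step: if every triple of points of a compact set `K ⊆ ℂ` can be covered by a closed
ball of radius `r'`, then all of `K` can be covered by a closed ball of radius `r'`. -/
lemma stmt10_cover (K : Set ℂ) (r' : ℝ)
    (h : ∀ a ∈ K, ∀ b ∈ K, ∀ d ∈ K, ∃ z : ℂ,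
      dist a z ≤ r' ∧ dist b z ≤ r' ∧ dist d z ≤ r') :
    ∃ z : ℂ, K ⊆ Metric.closedBall z r' := by
  have hfr : Module.finrank ℝ ℂ = 2 := Complex.finrank_real_complex
  have H := Convex.helly_theorem_compact' (𝕜 := ℝ) (ι := ↥K)
    (F := fun i => Metric.closedBall (i : ℂ) r')
    (fun i => convex_closedBall _ _) (fun i => isCompact_closedBall _ _) ?_
  · obtain ⟨z, hz⟩ := H
    refine ⟨z, fun x hx => ?_⟩
    have := Set.mem_iInter.1 hz ⟨x, hx⟩
    simpa [Metric.mem_closedBall, dist_comm] using this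
  · intro I hI
    rw [hfr] at hI
    rcases I.eq_empty_or_nonempty with rfl | ⟨i0, hi0⟩
    · simp
    · -- I has at most 3 elements; find a,b,d covering it
      have h3 : ∃ a b d : ↥K, (I : Set ↥K) ⊆ {a, b, d} := by
        interval_cases hc : I.card
        · exact absurd (Finset.card_eq_zero.1 hc) (Finset.nonempty_iff_ne_empty.1 ⟨i0, hi0⟩)
        · obtain ⟨a, rfl⟩ := Finset.card_eq_one.1 hc
          exact ⟨a, a, a, by simp⟩
        · obtain ⟨a, b, _, rfl⟩ := Finset.card_eq_two.1 hc
          exact ⟨a, b, b, by simp [Set.subset_def]⟩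
        · obtain ⟨a, b, d, _, _, _, rfl⟩ := Finset.card_eq_three.1 hc
          exact ⟨a, b, d, by simp [Set.subset_def]⟩
      obtain ⟨a, b, d, hsub⟩ := h3
      obtain ⟨z, hz1, hz2, hz3⟩ := h a a.2 b b.2 d d.2
      refine ⟨z, Set.mem_iInter₂.2 fun i hi => ?_⟩
      rcases hsub hi with rfl | rfl | rfl
      · simpa [Metric.mem_closedBall, dist_comm] using hz1
      · simpa [Metric.mem_closedBall, dist_comm] using hz2
      · simpa [Metric.mem_closedBall, dist_comm] using hz3

/-- if `closedBall c r` is the minimal enclosing disk of a compact set `K ⊆ ℂ`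
with at least two points, then there is a subset `T ⊆ K` with at most three points having the
same minimal enclosing disk (in particular the same minimal enclosing radius `r`). -/
theorem stmt10 (K : Set ℂ) (hK : IsCompact K) (hK2 : ∃ a ∈ K, ∃ b ∈ K, a ≠ b)
    (c : ℂ) (r : ℝ) (hsub : K ⊆ Metric.closedBall c r)
    (hmin : ∀ (c' : ℂ) (r' : ℝ), K ⊆ Metric.closedBall c' r' → r ≤ r') :
    ∃ T ⊆ K, T.ncard ≤ 3 ∧ T ⊆ Metric.closedBall c r ∧
      ∀ (c' : ℂ) (r' : ℝ), T ⊆ Metric.closedBall c' r' → r ≤ r' := by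
  -- For every n, there is a triple of K not coverable by a ball of radius r - 1/(n+1).
  have key : ∀ n : ℕ, ∃ a ∈ K, ∃ b ∈ K, ∃ d ∈ K, ∀ z : ℂ,
      ¬ (dist a z ≤ r - 1/(n+1) ∧ dist b z ≤ r - 1/(n+1) ∧ dist d z ≤ r - 1/(n+1)) := by
    intro n
    by_contra hcon
    push_neg at hcon
    obtain ⟨z, hz⟩ := stmt10_cover K (r - 1/(n+1)) (by
      intro a ha b hb d hd
      obtain ⟨z, h1, h2, h3⟩ := hcon a ha b hb d hd
      exact ⟨z, h1, h2, h3⟩)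
    have := hmin z _ hz
    have hpos : (0:ℝ) < 1/(n+1) := by positivity
    linarith
  choose a ha b hb d hd hno using key
  -- Take a convergent subsequence of the triples.
  obtain ⟨A, hA, φ1, hφ1, hAlim⟩ := hK.tendsto_subseq ha
  obtain ⟨B, hB, φ2, hφ2, hBlim⟩ := hK.tendsto_subseq (fun n => hb (φ1 n))
  obtain ⟨D, hD, φ3, hφ3, hDlim⟩ := hK.tendsto_subseq (fun n => hd (φ1 (φ2 n)))
  set ψ : ℕ → ℕ := φ1 ∘ φ2 ∘ φ3 with hψ
  have hψmono : StrictMono ψ := hφ1.comp (hφ2.comp hφ3)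
  have hAlim' : Filter.Tendsto (fun n => a (ψ n)) Filter.atTop (nhds A) :=
    (hAlim.comp (hφ2.comp hφ3).tendsto_atTop)
  have hBlim' : Filter.Tendsto (fun n => b (ψ n)) Filter.atTop (nhds B) :=
    (hBlim.comp hφ3.tendsto_atTop)
  have hDlim' : Filter.Tendsto (fun n => d (ψ n)) Filter.atTop (nhds D) := hDlim
  refine ⟨{A, B, D}, ?_, ?_, ?_, ?_⟩
  · intro x hx
    rcases hx with rfl | rfl | rfl
    exacts [hA, hB, hD]
  · exact (Set.ncard_insert_le _ _).trans (by
      have := Set.ncard_insert_le B ({D} : Set ℂ)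
      simp only [Set.ncard_singleton] at *
      omega)
  · intro x hx
    rcases hx with rfl | rfl | rfl
    exacts [hsub hA, hsub hB, hsub hD]
  · intro c' r' hTsub
    have hdA : dist A c' ≤ r' := hTsub (by simp)
    have hdB : dist B c' ≤ r' := hTsub (by simp)
    have hdD : dist D c' ≤ r' := hTsub (by simp)
    -- show r ≤ r' + ε for every ε > 0
    by_contra hlt
    push_neg at hlt
    set ε := (r - r') / 2 with hε
    have hεpos : 0 < ε := by simp [hε]; linarith
    -- choose n large
    have h1 : ∀ᶠ n in Filter.atTop, dist (a (ψ n)) A < ε/3 :=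
      hAlim'.eventually (Metric.ball_mem_nhds A (by positivity) : Metric.ball A (ε/3) ∈ nhds A)
    have h2 : ∀ᶠ n in Filter.atTop, dist (b (ψ n)) B < ε/3 :=
      hBlim'.eventually (Metric.ball_mem_nhds B (by positivity))
    have h3 : ∀ᶠ n in Filter.atTop, dist (d (ψ n)) D < ε/3 :=
      hDlim'.eventually (Metric.ball_mem_nhds D (by positivity))
    have h4 : ∀ᶠ n : ℕ in Filter.atTop, 1/((n:ℝ)+1) < ε/3 := by
      have := tendsto_one_div_add_atTop_nhds_zero_nat (𝕜 := ℝ)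
      exact this.eventually (eventually_lt_nhds (by positivity) : ∀ᶠ x in nhds (0:ℝ), x < ε/3)
    obtain ⟨n, ⟨⟨⟨hn1, hn2⟩, hn3⟩, hn4⟩⟩ := (((h1.and h2).and h3).and h4).exists
    have hψn : 1/((ψ n : ℝ)+1) ≤ 1/((n:ℝ)+1) := by
      apply one_div_le_one_div_of_le (by positivity)
      have h := hψmono.le_apply (x := n)
      push_cast
      exact_mod_cast by exact_mod_cast add_le_add (Nat.cast_le.2 h : (n:ℝ) ≤ ψ n) (le_refl (1:ℝ))
    have := hno (ψ n) c'
    apply this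
    refine ⟨?_, ?_, ?_⟩
    · calc dist (a (ψ n)) c' ≤ dist (a (ψ n)) A + dist A c' := dist_triangle _ _ _
        _ ≤ ε/3 + r' := by linarith
        _ ≤ r - 1/((ψ n:ℝ)+1) := by
            have : (1:ℝ)/((ψ n:ℝ)+1) < ε/3 := lt_of_le_of_lt hψn hn4
            linarith [hε ▸ hεpos]
    · calc dist (b (ψ n)) c' ≤ dist (b (ψ n)) B + dist B c' := dist_triangle _ _ _
        _ ≤ ε/3 + r' := by linarith
        _ ≤ r - 1/((ψ n:ℝ)+1) := by
            have : (1:ℝ)/((ψ n:ℝ)+1) < ε/3 := lt_of_le_of_lt hψn hn4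
            linarith
    · calc dist (d (ψ n)) c' ≤ dist (d (ψ n)) D + dist D c' := dist_triangle _ _ _
        _ ≤ ε/3 + r' := by linarith
        _ ≤ r - 1/((ψ n:ℝ)+1) := by
            have : (1:ℝ)/((ψ n:ℝ)+1) < ε/3 := lt_of_le_of_lt hψn hn4
            linarith
end

section
/- Any compact subset of ℂ of diameter d is contained in a closed disk of radius d/√3 (Jung's theorem in the plane). -/
open Metric

set_option maxHeartbeats 1000000

private lemma le_of_sq_le_sq' (a b : ℝ) (hb : 0 ≤ b) (h : a^2 ≤ b^2) : a ≤ b := by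
  nlinarith

private lemma jung_key (m x y r : ℝ) (hm : 0 ≤ m) (hr : 0 ≤ r) (hmr : m^2 ≤ 3*r^2)
    (hy : 0 ≤ y) (h1 : x^2 + y^2 ≤ m^2) (h2 : (x-m)^2 + y^2 ≤ m^2) :
    ∃ t : ℝ, m^2/4 + t^2 ≤ r^2 ∧ (x - m/2)^2 + (y - t)^2 ≤ r^2 := by
  obtain ⟨s, hs⟩ : ∃ s : ℝ, s = |x - m/2| := ⟨_, rfl⟩
  have hs0 : 0 ≤ s := hs ▸ abs_nonneg _
  have hs2 : s^2 = (x - m/2)^2 := hs ▸ sq_abs _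
  have hcon : s^2 + m*s + y^2 ≤ 3*m^2/4 := by
    rcases abs_cases (x - m/2) with ⟨h, _⟩ | ⟨h, _⟩ <;> rw [hs, h] <;> nlinarith
  have hsm : s ≤ m/2 := by nlinarith [sq_nonneg y, sq_nonneg (s - m/2)]
  have hq2 : s^2 ≤ m^2/3 := by nlinarith
  obtain ⟨q, hq0, hqq⟩ : ∃ q : ℝ, 0 ≤ q ∧ q^2 = m^2/3 - s^2 :=
    ⟨Real.sqrt (m^2/3 - s^2), Real.sqrt_nonneg _, Real.sq_sqrt (by linarith)⟩
  by_cases hcase : y ≤ q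
  · exact ⟨0, by nlinarith, by nlinarith⟩
  · push_neg at hcase
    obtain ⟨B, hB0, hBB⟩ : ∃ B : ℝ, 0 ≤ B ∧ B^2 = m^2/12 :=
      ⟨Real.sqrt (m^2/12), Real.sqrt_nonneg _, Real.sq_sqrt (by positivity)⟩
    have h2qB : m^2/3 - m*s ≤ 2*q*B := by
      rcases le_or_gt (m^2/3 - m*s) 0 with h | h
      · nlinarith
      · have e1 : (2*q*B)^2 = 4*(q^2)*(B^2) := by ring
        rw [hqq, hBB] at e1
        refine le_of_sq_le_sq' _ _ (by positivity) ?_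
        have hms : 0 ≤ m^2 * (s * (m - 2*s)) :=
          mul_nonneg (sq_nonneg m) (mul_nonneg hs0 (by linarith))
        rw [e1]; nlinarith
    have hyqB : y ≤ q + B := by
      refine le_of_sq_le_sq' _ _ (by positivity) ?_
      have e2 : (q + B)^2 = q^2 + 2*q*B + B^2 := by ring
      rw [e2, hqq, hBB]; linarith
    refine ⟨y - q, ?_, by nlinarith⟩
    have hle : (y - q)^2 ≤ m^2/12 := by
      have h' : y - q ≤ B := by linarith
      nlinarith
    linarith

private lemma jung3' (d : ℝ) (hd : 0 ≤ d) (a b c : ℂ)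
    (hab : dist a b ≤ d) (hac : dist a c ≤ dist a b) (hbc : dist b c ≤ dist a b) :
    ∃ p : ℂ, dist p a ≤ d / Real.sqrt 3 ∧ dist p b ≤ d / Real.sqrt 3
      ∧ dist p c ≤ d / Real.sqrt 3 := by
  set r := d / Real.sqrt 3 with hrdef
  have h3 : (0:ℝ) < Real.sqrt 3 := Real.sqrt_pos.mpr (by norm_num)
  have hr : 0 ≤ r := div_nonneg hd h3.le
  have hr2 : r^2 = d^2/3 := by
    rw [hrdef, div_pow, Real.sq_sqrt (by norm_num : (0:ℝ) ≤ 3)]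
  set m := dist a b with hmdef
  have hm0 : 0 ≤ m := dist_nonneg
  rcases eq_or_lt_of_le hm0 with hm | hm
  · -- m = 0: all points equal
    have hba : a = b := dist_eq_zero.mp hm.symm
    have hca : a = c := dist_eq_zero.mp (le_antisymm (by linarith) dist_nonneg)
    exact ⟨a, by simp [hr], by rw [← hba]; simp [hr], by rw [← hca]; simp [hr]⟩
  · -- m > 0
    set u : ℂ := (b - a) / (m : ℂ) with hudef
    have hmC : (m : ℂ) ≠ 0 := by exact_mod_cast hm.ne'
    have habs_u : ‖u‖ = 1 := by
      rw [hudef, norm_div, Complex.norm_real, Real.norm_eq_abs, abs_of_pos hm]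
      rw [hmdef, dist_comm, Complex.dist_eq]
      exact div_self (by rw [← Complex.dist_eq, dist_comm, ← hmdef]; positivity)
    have hu0 : u ≠ 0 := by
      intro h; rw [h, norm_zero] at habs_u; norm_num at habs_u
    have hbu : (m : ℂ) * u = b - a := by
      rw [hudef]; field_simp
    set w : ℂ := (c - a) / u with hwdef
    have hw_abs : ‖w‖ = dist a c := by
      rw [hwdef, norm_div, habs_u, div_one, dist_comm, Complex.dist_eq]
    have hwm_abs : ‖w - m‖ = dist b c := by
      have : w - m = (c - b) / u := by
        rw [hwdef]; field_simp; linear_combination -hbu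
      rw [this, norm_div, habs_u, div_one, dist_comm, Complex.dist_eq]
    set x := w.re with hxdef
    set y := |w.im| with hydef
    have hy0 : 0 ≤ y := abs_nonneg _
    have hy2 : y^2 = w.im^2 := sq_abs _
    have h1 : x^2 + y^2 ≤ m^2 := by
      have := Complex.sq_norm w
      rw [Complex.normSq_apply, hw_abs] at this
      nlinarith [hac, dist_nonneg (x := a) (y := c)]
    have h2 : (x - m)^2 + y^2 ≤ m^2 := by
      have := Complex.sq_norm (w - m)
      rw [Complex.normSq_apply, hwm_abs] at this
      simp only [Complex.sub_re, Complex.sub_im, Complex.ofReal_re, Complex.ofReal_im,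
        sub_zero] at this
      nlinarith [hbc, dist_nonneg (x := b) (y := c)]
    have hmr : m^2 ≤ 3*r^2 := by rw [hr2]; nlinarith
    obtain ⟨t, ht1, ht2⟩ := jung_key m x y r hm0 hr hmr hy0 h1 h2
    set t' : ℝ := if 0 ≤ w.im then t else -t with ht'def
    have ht'2 : t'^2 = t^2 := by rw [ht'def]; split <;> ring
    set p : ℂ := a + u * (↑(m/2) + ↑t' * Complex.I) with hpdef
    have key : ∀ z : ℂ, dist p z ^ 2
        = Complex.normSq ((↑(m/2) + ↑t' * Complex.I) - (z - a)/u) := by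
      intro z
      rw [Complex.dist_eq, ← Complex.sq_norm]
      have : p - z = u * ((↑(m/2) + ↑t' * Complex.I) - (z - a)/u) := by
        rw [hpdef]; field_simp; ring
      rw [this, norm_mul, habs_u, one_mul]
    have hda : dist p a ^ 2 = m^2/4 + t^2 := by
      rw [key a]
      simp [Complex.normSq_apply, Complex.add_re, Complex.add_im]
      rw [← ht'2]; ring
    have hdb : dist p b ^ 2 = m^2/4 + t^2 := by
      rw [key b]
      have : (b - a)/u = (m : ℂ) := by rw [← hbu]; field_simp
      rw [this]
      simp [Complex.normSq_apply]
      rw [← ht'2]; ring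
    have hdc : dist p c ^ 2 = (x - m/2)^2 + (y - t)^2 := by
      rw [key c, ← hwdef]
      simp [Complex.normSq_apply]
      rw [hydef, ht'def]
      rcases abs_cases w.im with ⟨h, _⟩ | ⟨h, _⟩
      · simp only [if_pos (by linarith : (0:ℝ) ≤ w.im), h]; ring
      · rw [if_neg (by linarith), h]; ring
    refine ⟨p, ?_, ?_, ?_⟩
    · exact le_of_sq_le_sq' _ _ hr (by rw [hda]; linarith)
    · exact le_of_sq_le_sq' _ _ hr (by rw [hdb]; linarith)
    · exact le_of_sq_le_sq' _ _ hr (by rw [hdc]; linarith)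

private lemma jung3 (d : ℝ) (hd : 0 ≤ d) (a b c : ℂ)
    (hab : dist a b ≤ d) (hac : dist a c ≤ d) (hbc : dist b c ≤ d) :
    ∃ p : ℂ, dist p a ≤ d / Real.sqrt 3 ∧ dist p b ≤ d / Real.sqrt 3
      ∧ dist p c ≤ d / Real.sqrt 3 := by
  rcases le_total (dist a c) (dist a b) with h1 | h1
  · rcases le_total (dist b c) (dist a b) with h2 | h2
    · exact jung3' d hd a b c hab h1 h2
    · obtain ⟨p, h₁, h₂, h₃⟩ := jung3' d hd b c a hbc
        (by rw [dist_comm b a]; linarith) (by rw [dist_comm c a]; linarith)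
      exact ⟨p, h₃, h₁, h₂⟩
  · rcases le_total (dist b c) (dist a c) with h2 | h2
    · obtain ⟨p, h₁, h₂, h₃⟩ := jung3' d hd a c b hac h1
        (by rw [dist_comm c b]; linarith)
      exact ⟨p, h₁, h₃, h₂⟩
    · obtain ⟨p, h₁, h₂, h₃⟩ := jung3' d hd b c a hbc
        (by rw [dist_comm b a]; linarith) (by rw [dist_comm c a]; linarith)
      exact ⟨p, h₃, h₁, h₂⟩

/-- Jung's theorem in the plane: any compact `K ⊆ ℂ` of diameter `d` is
contained in a closed disk of radius `d / √3`. -/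
theorem stmt11 (K : Set ℂ) (hK : IsCompact K) :
    ∃ c : ℂ, K ⊆ Metric.closedBall c (Metric.diam K / Real.sqrt 3) := by
  classical
  set d := Metric.diam K with hddef
  set r := d / Real.sqrt 3 with hrdef
  have hd : 0 ≤ d := Metric.diam_nonneg
  have hdist : ∀ x y : ℂ, x ∈ K → y ∈ K → dist x y ≤ d := fun x y hx hy =>
    Metric.dist_le_diam_of_mem hK.isBounded hx hy
  have h_inter : ∀ I : Finset ↥K, I.card ≤ Module.finrank ℝ ℂ + 1 →
      (⋂ i ∈ I, closedBall (i : ℂ) r).Nonempty := by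
    intro I hI
    rw [Complex.finrank_real_complex] at hI
    rcases I.eq_empty_or_nonempty with rfl | ⟨a0, ha0⟩
    · simp
    · have h1 : 1 ≤ I.card := Finset.card_pos.mpr ⟨a0, ha0⟩
      have cover : ∃ a b c : ↥K, ∀ i ∈ I, i = a ∨ i = b ∨ i = c := by
        obtain h | h | h : I.card = 1 ∨ I.card = 2 ∨ I.card = 3 := by omega
        · obtain ⟨a, rfl⟩ := Finset.card_eq_one.mp h
          exact ⟨a, a, a, by simp⟩
        · obtain ⟨a, b, _, rfl⟩ := Finset.card_eq_two.mp h
          exact ⟨a, a, b, by intro i hi; simp at hi ⊢; tauto⟩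
        · obtain ⟨a, b, c, _, _, _, rfl⟩ := Finset.card_eq_three.mp h
          exact ⟨a, b, c, by intro i hi; simp at hi ⊢; tauto⟩
      obtain ⟨a, b, c, hcov⟩ := cover
      obtain ⟨p, hp1, hp2, hp3⟩ := jung3 d hd a b c
        (hdist _ _ a.2 b.2) (hdist _ _ a.2 c.2) (hdist _ _ b.2 c.2)
      refine ⟨p, Set.mem_biInter fun i hi => ?_⟩
      rcases hcov i hi with rfl | rfl | rfl <;>
        simpa [Metric.mem_closedBall] using (by assumption : dist p (i : ℂ) ≤ r)
  obtain ⟨p, hp⟩ := Convex.helly_theorem_compact' (𝕜 := ℝ)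
    (F := fun i : ↥K => closedBall (i : ℂ) r)
    (fun i => convex_closedBall _ _) (fun i => isCompact_closedBall _ _) h_inter
  refine ⟨p, fun z hz => ?_⟩
  have := Set.mem_iInter.mp hp ⟨z, hz⟩
  rw [Metric.mem_closedBall] at this ⊢
  rwa [dist_comm]
end

section
/- Let a, b > 0, γ(t) = a·cos t + i·b·sin t, A = 2ab/(a²+b²), B = (b²−a²)/(b²+a²). Then for all s, t ∈ ℝ: Im(γ'(t)/(γ(t) − γ(s))) = (1/2)·A/(1 + B·cos(t+s)) whenever γ(t) ≠ γ(s). -/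
open Real

/-- for the ellipse parametrization `γ(t) = a cos t + i b sin t`, with
`A = 2ab/(a²+b²)` and `B = (b²−a²)/(b²+a²)`, one has
`Im(γ'(t)/(γ(t) − γ(s))) = (1/2)·A/(1 + B cos(t+s))` whenever `γ(t) ≠ γ(s)`. -/
theorem stmt12 (a b : ℝ) (ha : 0 < a) (hb : 0 < b) (γ γ' : ℝ → ℂ)
    (hγ : γ = fun t => (a * Real.cos t : ℝ) + (b * Real.sin t : ℝ) * Complex.I)
    (hγ' : γ' = fun t => (-(a * Real.sin t) : ℝ) + (b * Real.cos t : ℝ) * Complex.I)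
    (A B : ℝ) (hA : A = 2 * a * b / (a ^ 2 + b ^ 2)) (hB : B = (b ^ 2 - a ^ 2) / (b ^ 2 + a ^ 2))
    (s t : ℝ) (hne : γ t ≠ γ s) :
    (γ' t / (γ t - γ s)).im = (1 / 2) * A / (1 + B * Real.cos (t + s)) := by
  subst hγ hγ' hA hB
  have hw : ((fun t => ((a * Real.cos t : ℝ) : ℂ) + ((b * Real.sin t : ℝ) : ℂ) * Complex.I) t
      - (fun t => ((a * Real.cos t : ℝ) : ℂ) + ((b * Real.sin t : ℝ) : ℂ) * Complex.I) s) ≠ 0 :=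
    sub_ne_zero.mpr hne
  simp only at hw ⊢
  have hN : Complex.normSq (((a * Real.cos t : ℝ) : ℂ) + ((b * Real.sin t : ℝ) : ℂ) * Complex.I
      - (((a * Real.cos s : ℝ) : ℂ) + ((b * Real.sin s : ℝ) : ℂ) * Complex.I)) ≠ 0 :=
    (Complex.normSq_pos.mpr hw).ne'
  rw [Complex.div_im]
  have hN' : (a * Real.cos t - a * Real.cos s) ^ 2 + (b * Real.sin t - b * Real.sin s) ^ 2 ≠ 0 := by
    have := hN
    rw [Complex.normSq_apply] at this
    simp only [Complex.sub_re, Complex.sub_im, Complex.add_re, Complex.add_im,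
      Complex.mul_re, Complex.mul_im, Complex.I_re, Complex.I_im, Complex.ofReal_re,
      Complex.ofReal_im] at this
    intro h; apply this; nlinarith [h]
  simp only [Complex.normSq_apply, Complex.sub_re, Complex.sub_im, Complex.add_re, Complex.add_im,
    Complex.mul_re, Complex.mul_im, Complex.I_re, Complex.I_im, Complex.ofReal_re,
    Complex.ofReal_im, mul_zero, zero_mul, mul_one, sub_zero, zero_add, add_zero, zero_sub]
  have hab : a ^ 2 + b ^ 2 ≠ 0 := by positivity
  have hE : (a ^ 2 + b ^ 2) + (b ^ 2 - a ^ 2) * Real.cos (t + s) ≠ 0 := by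
    have h1 := Real.neg_one_le_cos (t + s)
    have h2 := Real.cos_le_one (t + s)
    have key : a ^ 2 * (1 - Real.cos (t + s)) + b ^ 2 * (1 + Real.cos (t + s)) > 0 := by
      rcases lt_or_eq_of_le h2 with h | h
      · nlinarith [pow_pos ha 2, pow_pos hb 2]
      · rw [h]; nlinarith [pow_pos hb 2]
    intro h; nlinarith
  have hE' : 1 + (b ^ 2 - a ^ 2) / (b ^ 2 + a ^ 2) * Real.cos (t + s) ≠ 0 := by
    have heq : 1 + (b ^ 2 - a ^ 2) / (b ^ 2 + a ^ 2) * Real.cos (t + s)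
        = ((a ^ 2 + b ^ 2) + (b ^ 2 - a ^ 2) * Real.cos (t + s)) / (a ^ 2 + b ^ 2) := by
      field_simp; ring
    rw [heq]
    exact div_ne_zero hE hab
  have hct := Real.sin_sq_add_cos_sq t
  have hcs := Real.sin_sq_add_cos_sq s
  have hX : Real.cos (t + s) = Real.cos t * Real.cos s - Real.sin t * Real.sin s :=
    Real.cos_add t s
  rw [hX] at hE ⊢
  rw [div_sub_div_same]
  have hD : (a * Real.cos t - a * Real.cos s) * (a * Real.cos t - a * Real.cos s) +
      (b * Real.sin t - b * Real.sin s) * (b * Real.sin t - b * Real.sin s) ≠ 0 := by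
    intro h; apply hN'; nlinarith [h]
  have hE2 : 1 + (b ^ 2 - a ^ 2) / (b ^ 2 + a ^ 2) *
      (Real.cos t * Real.cos s - Real.sin t * Real.sin s) ≠ 0 := by rw [← hX]; exact hE'
  rw [div_eq_div_iff hD hE2]
  set ct := Real.cos t; set st := Real.sin t; set cs := Real.cos s; set ss := Real.sin s
  have heq : 1 + (b ^ 2 - a ^ 2) / (b ^ 2 + a ^ 2) * (ct * cs - st * ss)
      = ((a ^ 2 + b ^ 2) + (b ^ 2 - a ^ 2) * (ct * cs - st * ss)) / (a ^ 2 + b ^ 2) := by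
    field_simp; ring
  rw [heq]
  field_simp
  linear_combination ((a ^ 2 + b ^ 2 + (b ^ 2 - a ^ 2) * (ct * cs - st * ss))
      - a ^ 2 * ss ^ 2 - b ^ 2 * cs ^ 2) * hct
    - (a ^ 2 * (1 - ct ^ 2) + b ^ 2 * (1 - st ^ 2)) * hcs
end

section
/- Let A, B be real numbers with A > 0, A² + B² = 1, B ≥ 0. Then (1/(2π)) ∫_{−π/2}^{π/2} (2AB·cos t)/(1 − B²·cos² t) dt = (2/π)·arctan(B/A). -/
open Real

/-- for real `A > 0`, `B ≥ 0` with `A² + B² = 1`,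
`(1/(2π)) ∫_{−π/2}^{π/2} (2AB cos t)/(1 − B² cos² t) dt = (2/π) arctan(B/A)`. -/
theorem stmt13 (A B : ℝ) (hA : 0 < A) (hB : 0 ≤ B) (hAB : A ^ 2 + B ^ 2 = 1) :
    (1 / (2 * π)) * ∫ t in (-(π / 2))..(π / 2),
        (2 * A * B * Real.cos t) / (1 - B ^ 2 * Real.cos t ^ 2) =
      (2 / π) * Real.arctan (B / A) := by
  have hA0 : A ≠ 0 := ne_of_gt hA
  have hden : ∀ t : ℝ, 0 < 1 - B ^ 2 * Real.cos t ^ 2 := by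
    intro t
    nlinarith [Real.sin_sq_add_cos_sq t, sq_nonneg (B * Real.sin t), sq_nonneg (Real.sin t)]
  have key : ∀ t ∈ Set.uIcc (-(π / 2)) (π / 2),
      HasDerivAt (fun t => 2 * Real.arctan (B * Real.sin t / A))
        ((2 * A * B * Real.cos t) / (1 - B ^ 2 * Real.cos t ^ 2)) t := by
    intro t _
    have h1 : HasDerivAt (fun t => B * Real.sin t / A) (B * Real.cos t / A) t :=
      ((Real.hasDerivAt_sin t).const_mul B).div_const A
    have h2 := (Real.hasDerivAt_arctan (B * Real.sin t / A)).comp t h1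
    have h3 := h2.const_mul 2
    refine h3.congr_deriv ?_
    have hd := hden t
    have hs := Real.sin_sq_add_cos_sq t
    have hrw : 1 - B ^ 2 * Real.cos t ^ 2 = A ^ 2 + B ^ 2 * Real.sin t ^ 2 := by nlinarith [hs]
    rw [hrw]
    have h2 : A ^ 2 + B ^ 2 * Real.sin t ^ 2 ≠ 0 := by positivity
    field_simp
  have hcont : IntervalIntegrable
      (fun t => (2 * A * B * Real.cos t) / (1 - B ^ 2 * Real.cos t ^ 2))
      MeasureTheory.volume (-(π / 2)) (π / 2) := by
    apply Continuous.intervalIntegrable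
    apply Continuous.div (by continuity) (by continuity)
    intro t; exact ne_of_gt (hden t)
  rw [intervalIntegral.integral_eq_sub_of_hasDerivAt key hcont]
  simp [Real.sin_pi_div_two]
  have hpi : π ≠ 0 := Real.pi_ne_zero
  rw [neg_div, Real.arctan_neg]
  field_simp
  ring
end

section
/- Let A > 0, B ≥ 0 with A² + B² = 1. For s ∈ [0, 2π], define F(s) = (1/(4π)) ∫_{−π}^{π} |A/(1 + B·cos(t+s)) − A/(1 + B·cos t)| dt. Then F(s) ≤ F(π) for all s ∈ [0, 2π], i.e., the supremum of F over [0,2π] is attained at s = π. -/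
open Real

/-- for `A > 0`, `0 ≤ B < 1` with `A² + B² = 1`, the function
`F(s) = (1/(4π)) ∫_{−π}^{π} |A/(1 + B cos(t+s)) − A/(1 + B cos t)| dt` on `[0, 2π]`
attains its maximum at `s = π`. -/
theorem stmt14 (A B : ℝ) (hA : 0 < A) (hB0 : 0 ≤ B) (hB1 : B < 1) (hAB : A ^ 2 + B ^ 2 = 1)
    (F : ℝ → ℝ)
    (hF : F = fun s => (1 / (4 * π)) * ∫ t in (-π)..π,
        |A / (1 + B * Real.cos (t + s)) - A / (1 + B * Real.cos t)|) :
    ∀ s ∈ Set.Icc (0 : ℝ) (2 * π), F s ≤ F π := by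
  have hπ := Real.pi_pos
  set c : ℝ → ℝ := fun t => A / (1 + B * Real.cos t) with hcdef
  have hden : ∀ t : ℝ, 0 < 1 + B * Real.cos t := by
    intro t
    nlinarith [Real.neg_one_le_cos t, Real.cos_le_one t]
  have hcont : Continuous c := by
    apply continuous_const.div (by continuity)
    exact fun t => (hden t).ne'
  have hint : ∀ a b : ℝ, IntervalIntegrable c MeasureTheory.volume a b :=
    fun a b => hcont.intervalIntegrable a b
  have hper : ∀ x : ℝ, c (x + 2 * π) = c x := fun x => by
    simp only [hcdef, Real.cos_add_two_pi]
  have heven : ∀ t : ℝ, c (-t) = c t := fun t => by simp only [hcdef, Real.cos_neg]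
  have hmono : ∀ x y : ℝ, Real.cos y ≤ Real.cos x → c x ≤ c y := by
    intro x y h
    have h1 := hden x
    have h2 := hden y
    rw [hcdef]
    rw [div_le_div_iff₀ h1 h2]
    nlinarith [mul_le_mul_of_nonneg_left (mul_le_mul_of_nonneg_left h hB0) hA.le]
  -- key: closed form for the integral when 0 ≤ s ≤ π
  have key : ∀ s : ℝ, 0 ≤ s → s ≤ π →
      (∫ t in (-π)..π, |c (t + s) - c t|) =
        2 * ((∫ t in (s/2)..(s/2 + π), c t) - ∫ t in (-(s/2))..(π - s/2), c t) := by
    intro s hs0 hsπ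
    have hcint : ∀ a b : ℝ, IntervalIntegrable (fun t => c (t + s))
        MeasureTheory.volume a b :=
      fun a b => (hcont.comp (continuous_id.add continuous_const)).intervalIntegrable a b
    have hgint : ∀ a b : ℝ, IntervalIntegrable (fun t => c (t + s) - c t)
        MeasureTheory.volume a b := fun a b => (hcint a b).sub (hint a b)
    have habs : ∀ a b : ℝ, IntervalIntegrable (fun t => |c (t + s) - c t|)
        MeasureTheory.volume a b := fun a b => (hgint a b).abs
    have hsin : 0 ≤ Real.sin (s/2) :=
      Real.sin_nonneg_of_nonneg_of_le_pi (by linarith) (by linarith)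
    have hcscos : ∀ t : ℝ, Real.cos (t + s) - Real.cos t
        = -2 * Real.sin (t + s/2) * Real.sin (s/2) := by
      intro t
      have e := Real.cos_sub_cos (t + s) t
      rw [show (t + s + t)/2 = t + s/2 by ring, show (t + s - t)/2 = s/2 by ring] at e
      exact e
    -- sign facts
    have hpos : ∀ t ∈ Set.Icc (-(s/2)) (π - s/2), c t ≤ c (t + s) := by
      intro t ht
      apply hmono
      have h1 : 0 ≤ Real.sin (t + s/2) :=
        Real.sin_nonneg_of_nonneg_of_le_pi (by linarith [ht.1]) (by linarith [ht.2])
      nlinarith [hcscos t, mul_nonneg h1 hsin]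
    have hneg1 : ∀ t ∈ Set.Icc (-π) (-(s/2)), c (t + s) ≤ c t := by
      intro t ht
      apply hmono
      have h1 : Real.sin (t + s/2) ≤ 0 :=
        Real.sin_nonpos_of_nonpos_of_neg_pi_le (by linarith [ht.2]) (by linarith [ht.1])
      nlinarith [hcscos t, mul_nonpos_of_nonpos_of_nonneg h1 hsin]
    have hneg2 : ∀ t ∈ Set.Icc (π - s/2) π, c (t + s) ≤ c t := by
      intro t ht
      apply hmono
      have e : Real.sin (t + s/2 - π) = -Real.sin (t + s/2) := Real.sin_sub_pi _
      have h2 : 0 ≤ Real.sin (t + s/2 - π) :=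
        Real.sin_nonneg_of_nonneg_of_le_pi (by linarith [ht.1]) (by linarith [ht.2])
      have h1 : Real.sin (t + s/2) ≤ 0 := by linarith
      nlinarith [hcscos t, mul_nonpos_of_nonpos_of_nonneg h1 hsin]
    -- abs rewriting on the three pieces
    have hord1 : (-π : ℝ) ≤ -(s/2) := by linarith
    have hord2 : (-(s/2) : ℝ) ≤ π - s/2 := by linarith
    have hord3 : (π - s/2 : ℝ) ≤ π := by linarith
    have E1 : (∫ t in (-π)..(-(s/2)), |c (t + s) - c t|)
        = -∫ t in (-π)..(-(s/2)), (c (t + s) - c t) := by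
      rw [← intervalIntegral.integral_neg]
      apply intervalIntegral.integral_congr
      intro t ht
      rw [Set.uIcc_of_le hord1] at ht
      exact abs_of_nonpos (by linarith [hneg1 t ht])
    have E2 : (∫ t in (-(s/2))..(π - s/2), |c (t + s) - c t|)
        = ∫ t in (-(s/2))..(π - s/2), (c (t + s) - c t) := by
      apply intervalIntegral.integral_congr
      intro t ht
      rw [Set.uIcc_of_le hord2] at ht
      exact abs_of_nonneg (by linarith [hpos t ht])
    have E3 : (∫ t in (π - s/2)..π, |c (t + s) - c t|)
        = -∫ t in (π - s/2)..π, (c (t + s) - c t) := by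
      rw [← intervalIntegral.integral_neg]
      apply intervalIntegral.integral_congr
      intro t ht
      rw [Set.uIcc_of_le hord3] at ht
      exact abs_of_nonpos (by linarith [hneg2 t ht])
    -- splitting
    have S1 : (∫ t in (-π)..(-(s/2)), (c (t + s) - c t))
        + (∫ t in (-(s/2))..(π - s/2), (c (t + s) - c t)) =
        ∫ t in (-π)..(π - s/2), (c (t + s) - c t) :=
      intervalIntegral.integral_add_adjacent_intervals (hgint _ _) (hgint _ _)
    have S2 : (∫ t in (-π)..(π - s/2), (c (t + s) - c t))
        + (∫ t in (π - s/2)..π, (c (t + s) - c t)) =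
        ∫ t in (-π)..π, (c (t + s) - c t) :=
      intervalIntegral.integral_add_adjacent_intervals (hgint _ _) (hgint _ _)
    have S1' : (∫ t in (-π)..(-(s/2)), |c (t + s) - c t|)
        + (∫ t in (-(s/2))..(π - s/2), |c (t + s) - c t|) =
        ∫ t in (-π)..(π - s/2), |c (t + s) - c t| :=
      intervalIntegral.integral_add_adjacent_intervals (habs _ _) (habs _ _)
    have S2' : (∫ t in (-π)..(π - s/2), |c (t + s) - c t|)
        + (∫ t in (π - s/2)..π, |c (t + s) - c t|) =
        ∫ t in (-π)..π, |c (t + s) - c t| :=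
      intervalIntegral.integral_add_adjacent_intervals (habs _ _) (habs _ _)
    -- total integral of the difference is zero
    have E0 : (∫ t in (-π)..π, (c (t + s) - c t)) = 0 := by
      rw [intervalIntegral.integral_sub (hcint _ _) (hint _ _)]
      rw [intervalIntegral.integral_comp_add_right c s]
      have hp : Function.Periodic c (2 * π) := hper
      have := hp.intervalIntegral_add_eq (-π + s) (-π)
      rw [show -π + s + 2 * π = π + s by ring, show -π + 2 * π = π by ring] at this
      rw [this, sub_self]
    -- the middle integral
    have M : (∫ t in (-(s/2))..(π - s/2), (c (t + s) - c t))
        = (∫ t in (s/2)..(s/2 + π), c t) - ∫ t in (-(s/2))..(π - s/2), c t := by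
      rw [intervalIntegral.integral_sub (hcint _ _) (hint _ _),
        intervalIntegral.integral_comp_add_right c s,
        show -(s/2) + s = s/2 by ring, show π - s/2 + s = s/2 + π by ring]
    linarith [S1, S2, S1', S2', E1, E2, E3, E0, M]
  -- monotonicity of the two pieces
  have Imono : ∀ s : ℝ, 0 ≤ s → s ≤ π →
      (∫ t in (s/2)..(s/2 + π), c t) ≤ ∫ t in (π/2)..(π/2 + π), c t := by
    intro s hs0 hsπ
    have h1 : (∫ t in (s/2)..(s/2 + π), c t)
        = (∫ t in (s/2)..(π/2), c t) + ∫ t in (π/2)..(s/2 + π), c t :=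
      (intervalIntegral.integral_add_adjacent_intervals (hint _ _) (hint _ _)).symm
    have h2 : (∫ t in (π/2)..(π/2 + π), c t)
        = (∫ t in (π/2)..(s/2 + π), c t) + ∫ t in (s/2 + π)..(π/2 + π), c t :=
      (intervalIntegral.integral_add_adjacent_intervals (hint _ _) (hint _ _)).symm
    have h3 : (∫ u in (s/2)..(π/2), c (u + π)) = ∫ t in (s/2 + π)..(π/2 + π), c t :=
      intervalIntegral.integral_comp_add_right c π
    have h4 : (∫ u in (s/2)..(π/2), c u) ≤ ∫ u in (s/2)..(π/2), c (u + π) := by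
      apply intervalIntegral.integral_mono_on (by linarith) (hint _ _)
        ((hcont.comp (continuous_id.add continuous_const)).intervalIntegrable _ _)
      intro u hu
      apply hmono
      simp only [Pi.add_apply, id_eq]
      rw [Real.cos_add_pi]
      have : 0 ≤ Real.cos u :=
        Real.cos_nonneg_of_mem_Icc ⟨by linarith [hu.1], by linarith [hu.2]⟩
      linarith
    linarith
  have Jmono : ∀ s : ℝ, 0 ≤ s → s ≤ π →
      (∫ t in (-(π/2))..(π - π/2), c t) ≤ ∫ t in (-(s/2))..(π - s/2), c t := by
    intro s hs0 hsπ
    have hpp : (π - π/2 : ℝ) = π/2 := by ring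
    have h1 : (∫ t in (-(π/2))..(π - π/2), c t)
        = (∫ t in (-(π/2))..(-(s/2)), c t) + ∫ t in (-(s/2))..(π - π/2), c t :=
      (intervalIntegral.integral_add_adjacent_intervals (hint _ _) (hint _ _)).symm
    have h2 : (∫ t in (-(s/2))..(π - s/2), c t)
        = (∫ t in (-(s/2))..(π - π/2), c t) + ∫ t in (π - π/2)..(π - s/2), c t :=
      (intervalIntegral.integral_add_adjacent_intervals (hint _ _) (hint _ _)).symm
    have h3 : (∫ u in (s/2)..(π/2), c (-u)) = ∫ t in (-(π/2))..(-(s/2)), c t :=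
      intervalIntegral.integral_comp_neg c
    have h3' : (∫ u in (s/2)..(π/2), c (-u)) = ∫ u in (s/2)..(π/2), c u :=
      intervalIntegral.integral_congr (fun u _ => heven u)
    have h4 : (∫ u in (s/2)..(π/2), c (π - u)) = ∫ t in (π - π/2)..(π - s/2), c t :=
      intervalIntegral.integral_comp_sub_left c π
    have h5 : (∫ u in (s/2)..(π/2), c u) ≤ ∫ u in (s/2)..(π/2), c (π - u) := by
      apply intervalIntegral.integral_mono_on (by linarith) (hint _ _)
        ((hcont.comp (continuous_const.sub continuous_id)).intervalIntegrable _ _)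
      intro u hu
      apply hmono
      simp only [Pi.sub_apply, id_eq]
      rw [Real.cos_pi_sub]
      have : 0 ≤ Real.cos u :=
        Real.cos_nonneg_of_mem_Icc ⟨by linarith [hu.1], by linarith [hu.2]⟩
      linarith
    linarith
  -- main inequality for 0 ≤ s ≤ π
  have main : ∀ s : ℝ, 0 ≤ s → s ≤ π →
      (∫ t in (-π)..π, |c (t + s) - c t|) ≤ ∫ t in (-π)..π, |c (t + π) - c t| := by
    intro s hs0 hsπ
    rw [key s hs0 hsπ, key π hπ.le le_rfl]
    have hI := Imono s hs0 hsπ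
    have hJ := Jmono s hs0 hsπ
    linarith
  -- symmetry reduction for π ≤ s ≤ 2π
  have flip : ∀ s : ℝ, π ≤ s → s ≤ 2 * π →
      (∫ t in (-π)..π, |c (t + s) - c t|) =
        ∫ t in (-π)..π, |c (t + (2 * π - s)) - c t| := by
    intro s hs1 hs2
    have h1 : ∀ t : ℝ, |c (t + (2 * π - s)) - c t| = |c (-t + s) - c (-t)| := by
      intro t
      have e1 : c (-t + s) = c (t + (2 * π - s)) := by
        have e2 : (-t + s : ℝ) = -(t + (2 * π - s)) + 2 * π := by ring
        rw [e2, hper, heven]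
      rw [e1, heven]
    have h2 : (∫ t in (-π)..π, |c (t + (2 * π - s)) - c t|)
        = ∫ t in (-π)..π, |c (-t + s) - c (-t)| :=
      intervalIntegral.integral_congr (fun t _ => h1 t)
    have h3 : (∫ t in (-π)..π, (fun x => |c (x + s) - c x|) (-t))
        = ∫ t in (-(π))..(-(-π)), |c (t + s) - c t| :=
      intervalIntegral.integral_comp_neg (fun x => |c (x + s) - c x|)
    simp only [neg_neg] at h3
    rw [h2, ← h3]
  -- conclude
  intro s hs
  obtain ⟨hs1, hs2⟩ := hs
  rw [hF]
  have fold : ∀ x : ℝ, A / (1 + B * Real.cos x) = c x := fun _ => rfl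
  simp only [fold]
  have hc4 : (0 : ℝ) ≤ 1 / (4 * π) := by positivity
  apply mul_le_mul_of_nonneg_left _ hc4
  rcases le_or_gt s π with h | h
  · exact main s hs1 h
  · rw [flip s h.le hs2]
    exact main (2 * π - s) (by linarith) (by linarith)
end

section
/- Let A > 0, 0 ≤ B < 1 with A² + B² = 1. Then (1/(4π)) ∫_{−π}^{π} |A/(1 − B·cos t) − A/(1 + B·cos t)| dt = (2/π)·arctan(B/A). -/
open Real

/-- for `A > 0`, `0 ≤ B < 1` with `A² + B² = 1`,
`(1/(4π)) ∫_{−π}^{π} |A/(1 − B cos t) − A/(1 + B cos t)| dt = (2/π) arctan(B/A)`. -/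
theorem stmt15 (A B : ℝ) (hA : 0 < A) (hB0 : 0 ≤ B) (hB1 : B < 1) (hAB : A ^ 2 + B ^ 2 = 1) :
    (1 / (4 * π)) * ∫ t in (-π)..π,
        |A / (1 - B * Real.cos t) - A / (1 + B * Real.cos t)| =
      (2 / π) * Real.arctan (B / A) := by
  have hπ := Real.pi_pos
  have hA' : A ≠ 0 := ne_of_gt hA
  have hden : ∀ t : ℝ, 0 < A ^ 2 + B ^ 2 * Real.sin t ^ 2 := fun t => by positivity
  -- simplify the absolute value
  have habs : ∀ t : ℝ, |A / (1 - B * Real.cos t) - A / (1 + B * Real.cos t)|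
      = 2 * A * B * |Real.cos t| / (A ^ 2 + B ^ 2 * Real.sin t ^ 2) := by
    intro t
    have hc : |Real.cos t| ≤ 1 := Real.abs_cos_le_one t
    have hc1 : -1 ≤ Real.cos t := (abs_le.mp hc).1
    have hc2 : Real.cos t ≤ 1 := (abs_le.mp hc).2
    have h1a : 0 < 1 - B * Real.cos t := by nlinarith
    have h1b : 0 < 1 + B * Real.cos t := by nlinarith
    have hsc : Real.sin t ^ 2 + Real.cos t ^ 2 = 1 := Real.sin_sq_add_cos_sq t
    have hprod : (1 - B * Real.cos t) * (1 + B * Real.cos t)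
        = A ^ 2 + B ^ 2 * Real.sin t ^ 2 := by nlinarith
    rw [div_sub_div _ _ (ne_of_gt h1a) (ne_of_gt h1b), abs_div,
      abs_of_pos (by positivity : (0:ℝ) < (1 - B * Real.cos t) * (1 + B * Real.cos t)), hprod]
    congr 1
    have : A * (1 + B * Real.cos t) - (1 - B * Real.cos t) * A
        = 2 * A * B * Real.cos t := by ring
    rw [this, abs_mul, abs_of_nonneg (by positivity : (0:ℝ) ≤ 2 * A * B)]
  set f : ℝ → ℝ := fun t => 2 * A * B * |Real.cos t| / (A ^ 2 + B ^ 2 * Real.sin t ^ 2) with hf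
  have hfcont : Continuous f := by
    apply Continuous.div
    · exact continuous_const.mul (continuous_abs.comp Real.continuous_cos)
    · fun_prop
    · intro t; exact ne_of_gt (hden t)
  have hint : ∀ a b : ℝ, IntervalIntegrable f MeasureTheory.volume a b :=
    fun a b => hfcont.intervalIntegrable a b
  -- antiderivative
  have hF : ∀ t : ℝ, HasDerivAt (fun t => 2 * Real.arctan (B * Real.sin t / A))
      (2 * A * B * Real.cos t / (A ^ 2 + B ^ 2 * Real.sin t ^ 2)) t := by
    intro t
    have h1 : HasDerivAt (fun t => B * Real.sin t / A) (B * Real.cos t / A) t :=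
      ((Real.hasDerivAt_sin t).const_mul B).div_const A
    have h2 := (Real.hasDerivAt_arctan (B * Real.sin t / A)).comp t h1
    have h3 := h2.const_mul 2
    convert h3 using 1
    · rfl
    · rfl
    · rfl
    have h4 : (0:ℝ) < 1 + (B * Real.sin t / A) ^ 2 := by positivity
    field_simp
  -- split the integral
  have hsplit : (∫ t in (-π)..π, f t)
      = (∫ t in (-π)..(-(π/2)), f t) + (∫ t in (-(π/2))..(π/2), f t)
        + (∫ t in (π/2)..π, f t) := by
    rw [intervalIntegral.integral_add_adjacent_intervals (hint _ _) (hint _ _),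
      intervalIntegral.integral_add_adjacent_intervals (hint _ _) (hint _ _)]
  -- middle piece
  have hmid : (∫ t in (-(π/2))..(π/2), f t) = 4 * Real.arctan (B / A) := by
    have hcong : (∫ t in (-(π/2))..(π/2), f t)
        = ∫ t in (-(π/2))..(π/2), 2 * A * B * Real.cos t / (A ^ 2 + B ^ 2 * Real.sin t ^ 2) := by
      apply intervalIntegral.integral_congr
      intro t ht
      rw [Set.uIcc_of_le (by linarith : -(π/2) ≤ π/2)] at ht
      have hcos : 0 ≤ Real.cos t := Real.cos_nonneg_of_mem_Icc ht
      simp only [hf, abs_of_nonneg hcos]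
    rw [hcong, intervalIntegral.integral_eq_sub_of_hasDerivAt (fun t _ => hF t)
      ((by fun_prop (disch := intro t; exact ne_of_gt (hden t)) :
        Continuous fun t => 2 * A * B * Real.cos t / (A ^ 2 + B ^ 2 * Real.sin t ^ 2)).intervalIntegrable _ _)]
    simp only [Real.sin_pi_div_two, Real.sin_neg, Real.sin_pi, mul_neg, neg_mul, mul_one,
      mul_zero, neg_zero, zero_div, Real.arctan_zero, neg_div, Real.arctan_neg]
    ring
  -- right piece
  have hright : (∫ t in (π/2)..π, f t) = 2 * Real.arctan (B / A) := by
    have hcong : (∫ t in (π/2)..π, f t)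
        = ∫ t in (π/2)..π, -(2 * A * B * Real.cos t / (A ^ 2 + B ^ 2 * Real.sin t ^ 2)) := by
      apply intervalIntegral.integral_congr
      intro t ht
      rw [Set.uIcc_of_le (by linarith : π/2 ≤ π)] at ht
      have hcos : Real.cos t ≤ 0 :=
        Real.cos_nonpos_of_pi_div_two_le_of_le ht.1 (by linarith [ht.2])
      simp only [hf, abs_of_nonpos hcos]
      ring
    rw [hcong, intervalIntegral.integral_eq_sub_of_hasDerivAt (fun t _ => (hF t).neg)
      ((by fun_prop (disch := intro t; exact ne_of_gt (hden t)) :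
        Continuous fun t => -(2 * A * B * Real.cos t / (A ^ 2 + B ^ 2 * Real.sin t ^ 2))).intervalIntegrable _ _)]
    simp only [Pi.neg_apply, Real.sin_pi_div_two, Real.sin_neg, Real.sin_pi, mul_neg, neg_mul, mul_one,
      mul_zero, neg_zero, zero_div, Real.arctan_zero, neg_div, Real.arctan_neg]
    ring
  -- left piece
  have hleft : (∫ t in (-π)..(-(π/2)), f t) = 2 * Real.arctan (B / A) := by
    have hcong : (∫ t in (-π)..(-(π/2)), f t)
        = ∫ t in (-π)..(-(π/2)), -(2 * A * B * Real.cos t / (A ^ 2 + B ^ 2 * Real.sin t ^ 2)) := by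
      apply intervalIntegral.integral_congr
      intro t ht
      rw [Set.uIcc_of_le (by linarith : -π ≤ -(π/2))] at ht
      have hcos : Real.cos t ≤ 0 := by
        have h := Real.cos_nonpos_of_pi_div_two_le_of_le
          (by linarith [ht.2] : π/2 ≤ -t) (by linarith [ht.1] : -t ≤ π + π/2)
        rwa [Real.cos_neg] at h
      simp only [hf, abs_of_nonpos hcos]
      ring
    rw [hcong, intervalIntegral.integral_eq_sub_of_hasDerivAt (fun t _ => (hF t).neg)
      ((by fun_prop (disch := intro t; exact ne_of_gt (hden t)) :
        Continuous fun t => -(2 * A * B * Real.cos t / (A ^ 2 + B ^ 2 * Real.sin t ^ 2))).intervalIntegrable _ _)]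
    simp only [Pi.neg_apply, Real.sin_pi_div_two, Real.sin_neg, Real.sin_pi, mul_neg, neg_mul, mul_one,
      mul_zero, neg_zero, zero_div, Real.arctan_zero, neg_div, Real.arctan_neg]
    ring
  have hcongI : (∫ t in (-π)..π,
      |A / (1 - B * Real.cos t) - A / (1 + B * Real.cos t)|) = ∫ t in (-π)..π, f t := by
    apply intervalIntegral.integral_congr
    intro t _
    exact habs t
  rw [hcongI, hsplit, hleft, hmid, hright]
  field_simp
  ring
end

section
/- Let H be a complex Hilbert space, T a bounded linear operator on H, f a function holomorphic on an open neighborhood U of the spectrum of T with sup_U |f| ≤ 1, and x ∈ H a unit vector such that ‖f(T)x‖ = sup{‖g(T)‖ : g holomorphic on U, sup_U |g| ≤ 1}. If ‖f(T)‖ > 1, then ⟨f(T)x, x⟩ = 0. -/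
lemma mobius_abs (z lam : ℂ) (hz : ‖z‖ ≤ 1) (hl : ‖lam‖ ≤ 1) :
    ‖z + lam‖ ≤ ‖1 + (starRingEnd ℂ) lam * z‖ := by
  have key : Complex.normSq (1 + (starRingEnd ℂ) lam * z) - Complex.normSq (z + lam)
      = (1 - Complex.normSq z) * (1 - Complex.normSq lam) := by
    simp [Complex.normSq_apply, Complex.add_re, Complex.add_im, Complex.mul_re, Complex.mul_im]
    ring
  have hz2 : Complex.normSq z ≤ 1 := by
    rw [← Complex.sq_norm]; nlinarith [norm_nonneg z]
  have hl2 : Complex.normSq lam ≤ 1 := by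
    rw [← Complex.sq_norm]; nlinarith [norm_nonneg lam]
  have : Complex.normSq (z + lam) ≤ Complex.normSq (1 + (starRingEnd ℂ) lam * z) := by nlinarith
  rw [Complex.norm_def, Complex.norm_def]
  exact Real.sqrt_le_sqrt this

/-- Let `T` be a bounded operator on a complex Hilbert space `H`, `U` an open
neighbourhood of the spectrum of `T`, and `Φ` a holomorphic functional calculus for `T` on `U`
(a unital algebra-homomorphic assignment `g ↦ g(T)` on functions holomorphic on `U`, sending
the identity function to `T`). If `f` is holomorphic on `U` with `sup_U |f| ≤ 1`, `x` is a
unit vector with `‖f(T)x‖ = sup {‖g(T)‖ : g holomorphic on U, sup_U |g| ≤ 1}` (an extremal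
pair), and `‖f(T)‖ > 1`, then `⟨f(T)x, x⟩ = 0`. -/
theorem stmt18 {H : Type*} [NormedAddCommGroup H] [InnerProductSpace ℂ H] [CompleteSpace H]
    (T : H →L[ℂ] H) (U : Set ℂ) (hU : IsOpen U) (hσ : spectrum ℂ T ⊆ U)
    (Φ : (ℂ → ℂ) → (H →L[ℂ] H))
    (hadd : ∀ g h : ℂ → ℂ, DifferentiableOn ℂ g U → DifferentiableOn ℂ h U →
      Φ (g + h) = Φ g + Φ h)
    (hmul : ∀ g h : ℂ → ℂ, DifferentiableOn ℂ g U → DifferentiableOn ℂ h U →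
      Φ (g * h) = Φ g * Φ h)
    (hsmul : ∀ (c : ℂ) (g : ℂ → ℂ), DifferentiableOn ℂ g U → Φ (c • g) = c • Φ g)
    (hone : Φ 1 = 1) (hid : Φ id = T)
    (f : ℂ → ℂ) (hf : DifferentiableOn ℂ f U) (hf1 : ∀ z ∈ U, ‖f z‖ ≤ 1)
    (x : H) (hx : ‖x‖ = 1)
    (hext : ‖Φ f x‖ = sSup {r : ℝ | ∃ g : ℂ → ℂ, DifferentiableOn ℂ g U ∧
      (∀ z ∈ U, ‖g z‖ ≤ 1) ∧ r = ‖Φ g‖})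
    (hbig : 1 < ‖Φ f‖) :
    inner ℂ (Φ f x) x = (0 : ℂ) := by
  set S : Set ℝ := {r : ℝ | ∃ g : ℂ → ℂ, DifferentiableOn ℂ g U ∧
      (∀ z ∈ U, ‖g z‖ ≤ 1) ∧ r = ‖Φ g‖} with hS
  have hfS : ‖Φ f‖ ∈ S := ⟨f, hf, hf1, rfl⟩
  by_cases hbdd : BddAbove S
  case neg =>
    have h0 : sSup S = 0 := Real.sSup_of_not_bddAbove hbdd
    have : Φ f x = 0 := by
      have := hext; rw [h0] at this
      exact norm_eq_zero.mp this
    simp [this]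
  case pos =>
  set M := sSup S with hM
  have hMf : ‖Φ f‖ ≤ M := le_csSup hbdd hfS
  have hxle : ‖Φ f x‖ ≤ ‖Φ f‖ := by
    calc ‖Φ f x‖ ≤ ‖Φ f‖ * ‖x‖ := (Φ f).le_opNorm x
    _ = ‖Φ f‖ := by rw [hx, mul_one]
  have hMeq : ‖Φ f‖ = M := le_antisymm hMf (hext ▸ hxle)
  have hxM : ‖Φ f x‖ = M := hext
  have hM1 : 1 < M := hMeq ▸ hbig
  have hM0 : 0 < M := by linarith
  have hD1 : DifferentiableOn ℂ (1 : ℂ → ℂ) U := differentiableOn_const 1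
  -- Step A : scaling bound
  have hA : ∀ (C : ℝ) (g : ℂ → ℂ), 0 < C → DifferentiableOn ℂ g U →
      (∀ z ∈ U, ‖g z‖ ≤ C) → ‖Φ g‖ ≤ C * M := by
    intro C g hC hg hgC
    have hC0 : (C : ℂ) ≠ 0 := by exact_mod_cast hC.ne'
    have hhd : DifferentiableOn ℂ (((C : ℂ)⁻¹) • g) U := by
      show DifferentiableOn ℂ (fun z => ((C : ℂ)⁻¹) * g z) U
      exact hg.const_mul _
    have hΦ : Φ g = (C : ℂ) • Φ (((C : ℂ)⁻¹) • g) := by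
      rw [← hsmul _ _ hhd]
      congr 1
      funext z
      show g z = (C : ℂ) • (((C : ℂ)⁻¹) * g z)
      rw [smul_eq_mul]
      field_simp
    have hhS : ‖Φ (((C : ℂ)⁻¹) • g)‖ ∈ S := by
      refine ⟨_, hhd, ?_, rfl⟩
      intro z hz
      have := hgC z hz
      simp only [Pi.smul_apply, smul_eq_mul, norm_mul, norm_inv, Complex.norm_real, Real.norm_eq_abs,
        abs_of_pos hC]
      rw [inv_mul_le_iff₀ hC, mul_one]
      exact this
    have hle : ‖Φ (((C : ℂ)⁻¹) • g)‖ ≤ M := le_csSup hbdd hhS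
    rw [hΦ, norm_smul]
    simp only [Complex.norm_real, Real.norm_eq_abs, abs_of_pos hC]
    exact mul_le_mul_of_nonneg_left hle hC.le
  -- Step B : key inequality
  have hB : ∀ lam : ℂ, ‖lam‖ < 1 →
      ‖Φ f x + lam • x‖ ≤ M * ‖x + ((starRingEnd ℂ) lam) • Φ f x‖ := by
    intro lam hlam
    by_cases hl0 : lam = 0
    · simp [hl0, hxM, hx, hM0.le]
    set a : ℝ := ‖lam‖ with ha
    have ha0 : 0 < a := norm_pos_iff.mpr hl0
    set c : ℂ := (starRingEnd ℂ) lam with hc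
    set den : ℂ → ℂ := fun z => 1 + c * f z with hden
    have hdend : DifferentiableOn ℂ den U :=
      (differentiableOn_const _).add (hf.const_mul _)
    have hdenx : Φ den x = x + c • Φ f x := by
      have h1 : den = (1 : ℂ → ℂ) + c • f := by funext z; simp [hden]
      rw [h1, hadd (1 : ℂ → ℂ) (c • f) hD1 (by show DifferentiableOn ℂ (fun z => c * f z) U; exact hf.const_mul c), hsmul c f hf, hone]
      simp
    have hfl : Φ (f + lam • (1 : ℂ → ℂ)) = Φ f + lam • (1 : H →L[ℂ] H) := by
      rw [hadd f (lam • (1 : ℂ → ℂ)) hf (by show DifferentiableOn ℂ (fun z => lam * 1) U; exact differentiableOn_const _), hsmul lam 1 hD1, hone]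
    set p : ℕ → ℂ → ℂ := fun N z => (f z + lam) * (∑ k ∈ Finset.range N, (-(c * f z))^k)
      with hp
    set e : ℕ → ℂ → ℂ := fun N z => (f z + lam) * (-(c * f z))^N with he
    have hpd : ∀ N, DifferentiableOn ℂ (p N) U := by
      intro N
      apply (hf.add_const lam).mul
      apply DifferentiableOn.fun_sum
      intro k _
      exact ((hf.const_mul c).neg).pow k
    have hed : ∀ N, DifferentiableOn ℂ (e N) U :=
      fun N => (hf.add_const lam).mul (((hf.const_mul c).neg).pow N)
    have hgeom : ∀ (z : ℂ) (N : ℕ),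
        (∑ k ∈ Finset.range N, (-(c * f z))^k) * (1 + c * f z) = 1 - (-(c * f z))^N := by
      intro z N
      have h := geom_sum_mul (-(c * f z)) N
      linear_combination -h
    have hid2 : ∀ N : ℕ, f + lam • (1 : ℂ → ℂ) = (p N) * den + e N := by
      intro N
      funext z
      simp only [Pi.add_apply, Pi.mul_apply, Pi.smul_apply, Pi.one_apply, smul_eq_mul,
        mul_one, hp, he, hden]
      linear_combination (-(f z + lam)) * hgeom z N
    have hvec : ∀ N : ℕ,
        Φ f x + lam • x = Φ (p N) (x + c • Φ f x) + Φ (e N) x := by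
      intro N
      have hop : Φ f + lam • (1 : H →L[ℂ] H) = Φ (p N) * Φ den + Φ (e N) := by
        rw [← hfl, hid2 N, hadd (p N * den) (e N) ((hpd N).mul hdend) (hed N),
          hmul (p N) den (hpd N) hdend]
      have := congrArg (fun (A : H →L[ℂ] H) => A x) hop
      simpa [hdenx] using this
    -- pointwise bounds
    have hwabs : ∀ z ∈ U, ‖-(c * f z)‖ ≤ a := by
      intro z hz
      simp only [norm_neg, norm_mul, hc, Complex.norm_conj, ← ha]
      calc a * ‖f z‖ ≤ a * 1 :=
        mul_le_mul_of_nonneg_left (hf1 z hz) ha0.le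
      _ = a := mul_one _
    have hmob : ∀ z ∈ U, ‖f z + lam‖ ≤ ‖1 + c * f z‖ :=
      fun z hz => mobius_abs (f z) lam (hf1 z hz) hlam.le
    have hdenpos : ∀ z ∈ U, 0 < ‖1 + c * f z‖ := by
      intro z hz
      have h := norm_add_le (1 + c * f z) (-(c * f z))
      have h2 : (1 + c * f z) + (-(c * f z)) = 1 := by ring
      rw [h2, norm_one] at h
      have := hwabs z hz
      linarith
    have hpbound : ∀ N : ℕ, ∀ z ∈ U, ‖p N z‖ ≤ 1 + a^N := by
      intro N z hz
      have hiden : p N z * (1 + c * f z) = (f z + lam) * (1 - (-(c * f z))^N) := by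
        simp only [hp]
        linear_combination (f z + lam) * hgeom z N
      have habs : ‖p N z‖ * ‖1 + c * f z‖
          ≤ ‖1 + c * f z‖ * (1 + a^N) := by
        rw [← norm_mul, hiden, norm_mul]
        have h1 : ‖1 - (-(c * f z))^N‖ ≤ 1 + a^N := by
          have h3 := norm_add_le 1 (-((-(c * f z))^N))
          have h4 : (1 : ℂ) + -((-(c * f z))^N) = 1 - (-(c * f z))^N := by ring
          rw [h4, norm_one, norm_neg, norm_pow] at h3
          have h5 := pow_le_pow_left₀ (norm_nonneg _) (hwabs z hz) N
          linarith
        exact mul_le_mul (hmob z hz) h1 (norm_nonneg _) (norm_nonneg _)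
      have hdpos := hdenpos z hz
      rw [mul_comm (‖1 + c * f z‖)] at habs
      exact le_of_mul_le_mul_right habs hdpos
    have hebound : ∀ N : ℕ, ∀ z ∈ U, ‖e N z‖ ≤ (1 + a) * a^N := by
      intro N z hz
      simp only [he, norm_mul, norm_pow]
      have h1 : ‖f z + lam‖ ≤ 1 + a := by
        calc ‖f z + lam‖ ≤ ‖f z‖ + a := norm_add_le _ _
        _ ≤ 1 + a := by linarith [hf1 z hz]
      have h2 : (‖-(c * f z)‖)^N ≤ a^N :=
        pow_le_pow_left₀ (norm_nonneg _) (hwabs z hz) N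
      exact mul_le_mul h1 h2 (by positivity) (by linarith)
    -- norm bounds for each N
    have hbnd : ∀ N : ℕ, ‖Φ f x + lam • x‖ ≤
        (1 + a^N) * M * ‖x + c • Φ f x‖ + (1 + a) * a^N * M := by
      intro N
      rw [hvec N]
      have h1 : ‖Φ (p N) (x + c • Φ f x)‖ ≤ (1 + a^N) * M * ‖x + c • Φ f x‖ := by
        calc ‖Φ (p N) (x + c • Φ f x)‖ ≤ ‖Φ (p N)‖ * ‖x + c • Φ f x‖ :=
          (Φ (p N)).le_opNorm _
        _ ≤ (1 + a^N) * M * ‖x + c • Φ f x‖ := by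
          apply mul_le_mul_of_nonneg_right _ (norm_nonneg _)
          exact hA _ _ (by positivity) (hpd N) (hpbound N)
      have h2 : ‖Φ (e N) x‖ ≤ (1 + a) * a^N * M := by
        calc ‖Φ (e N) x‖ ≤ ‖Φ (e N)‖ * ‖x‖ := (Φ (e N)).le_opNorm _
        _ = ‖Φ (e N)‖ := by rw [hx, mul_one]
        _ ≤ (1 + a) * a^N * M := hA _ _ (by positivity) (hed N) (hebound N)
      calc ‖Φ (p N) (x + c • Φ f x) + Φ (e N) x‖
          ≤ ‖Φ (p N) (x + c • Φ f x)‖ + ‖Φ (e N) x‖ := norm_add_le _ _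
      _ ≤ (1 + a^N) * M * ‖x + c • Φ f x‖ + (1 + a) * a^N * M := add_le_add h1 h2
    -- pass to the limit
    have hpow : Filter.Tendsto (fun N : ℕ => a^N) Filter.atTop (nhds 0) :=
      tendsto_pow_atTop_nhds_zero_of_lt_one ha0.le hlam
    have hlim : Filter.Tendsto
        (fun N : ℕ => (1 + a^N) * M * ‖x + c • Φ f x‖ + (1 + a) * a^N * M)
        Filter.atTop (nhds ((1 + 0) * M * ‖x + c • Φ f x‖ + (1 + a) * 0 * M)) := by
      apply Filter.Tendsto.add
      · exact (((tendsto_const_nhds.add hpow).mul tendsto_const_nhds).mul tendsto_const_nhds)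
      · exact ((tendsto_const_nhds.mul hpow).mul tendsto_const_nhds)
    have : (1 + 0 : ℝ) * M * ‖x + c • Φ f x‖ + (1 + a) * 0 * M = M * ‖x + c • Φ f x‖ := by
      ring
    rw [this] at hlim
    exact le_of_tendsto_of_tendsto' tendsto_const_nhds hlim hbnd
  -- Step C : conclusion
  by_contra hd0
  set d : ℂ := inner ℂ (Φ f x) x with hd
  have ha : 0 < ‖d‖ := norm_pos_iff.mpr hd0
  set A : ℝ := ‖d‖ with hA'
  have hdM : A ≤ M := by
    have h1 : ‖(inner ℂ (Φ f x) x : ℂ)‖ ≤ ‖Φ f x‖ * ‖x‖ := norm_inner_le_norm _ _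
    rw [hxM, hx, mul_one] at h1
    exact h1
  set t : ℝ := A / (M^2 + 1) with ht
  have htpos : 0 < t := by positivity
  have htlt : t < 1 := by
    rw [ht, div_lt_one (by positivity)]
    nlinarith
  set lam : ℂ := -(t : ℂ) * (starRingEnd ℂ) d / (A : ℂ) with hlam'
  have hA0 : (A : ℂ) ≠ 0 := by exact_mod_cast ha.ne'
  have hlabs : ‖lam‖ = t := by
    rw [hlam']
    rw [norm_div, norm_mul, norm_neg, Complex.norm_conj, Complex.norm_real,
      Complex.norm_real, Real.norm_eq_abs, Real.norm_eq_abs, abs_of_pos htpos, abs_of_pos ha]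
    field_simp
    exact hA'.symm
  have hld : lam * d = (-(t * A) : ℝ) := by
    rw [hlam']
    have h2 : (starRingEnd ℂ) d * d = (A : ℂ)^2 := by
      rw [mul_comm, Complex.mul_conj, ← Complex.sq_norm, ← hA']
      push_cast
      ring
    field_simp
    have hcast : ((-(t * A) : ℝ) : ℂ) = -(t:ℂ) * A := by push_cast; ring
    linear_combination (-(t:ℂ)) * h2 - (A:ℂ) * hcast
  have hkey := hB lam (hlabs ▸ htlt)
  -- expand the norms
  have hL : ‖Φ f x + lam • x‖^2 = M^2 - 2*(t*A) + t^2 := by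
    rw [@norm_add_sq ℂ]
    rw [inner_smul_right, ← hd, hld, norm_smul, hxM, hx]
    simp [hlabs]
    ring
  have hR : ‖x + (starRingEnd ℂ) lam • Φ f x‖^2 = 1 - 2*(t*A) + t^2 * M^2 := by
    rw [@norm_add_sq ℂ]
    rw [inner_smul_right, norm_smul, hxM, hx]
    have h1 : (inner ℂ x (Φ f x) : ℂ) = (starRingEnd ℂ) d := by
      rw [hd, ← inner_conj_symm]
    rw [h1]
    have h2 : (starRingEnd ℂ) lam * (starRingEnd ℂ) d = (starRingEnd ℂ) (lam * d) := by
      rw [map_mul]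
    rw [h2, hld]
    simp [hlabs, Complex.norm_conj]
    ring
  have hsq : ‖Φ f x + lam • x‖^2 ≤ M^2 * ‖x + (starRingEnd ℂ) lam • Φ f x‖^2 := by
    have hn1 : (0:ℝ) ≤ ‖Φ f x + lam • x‖ := norm_nonneg _
    have hn2 : (0:ℝ) ≤ ‖x + (starRingEnd ℂ) lam • Φ f x‖ := norm_nonneg _
    nlinarith
  rw [hL, hR] at hsq
  have htA : t * (M^2 + 1) = A := by
    rw [ht]; field_simp
  clear_value M d A t lam
  clear hB hA hkey hL hR hlabs hld hlam' hd hdM hext hMf hxle hMeq hxM hfS hbdd hd0 hA0 hS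
  have hM2 : 0 < M^2 - 1 := by nlinarith
  have h7 : t^2 * (M^2+1) * (M^2-1) = t * A * (M^2-1) := by
    have h6 : t^2 * (M^2+1) = t * A := by rw [← htA]; ring
    rw [h6]
  have hfin : t * A * (M^2 - 1) ≤ 0 := by linarith [hsq, h7]
  nlinarith [mul_pos (mul_pos htpos ha) hM2, hfin]
end

section
/- Let Ω ⊆ ℂ be a compact convex set with nonempty interior such that for every p in the interior, every polynomial q, and every bounded operator S on a finite-dimensional complex Hilbert space with numerical range W(S) contained in the interior of Ω, one has ‖q(S)‖ ≤ K·sup_{z∈Ω}|q(z)|. Then for every bounded operator T on any complex Hilbert space with closure of W(T) contained in the interior of Ω, and every polynomial q, ‖q(T)‖ ≤ K·sup_{z∈Ω}|q(z)|. -/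
universe u

/-- The numerical range `W(T) = {⟨Tx, x⟩ : ‖x‖ = 1}` of a bounded operator on a complex
inner-product space (here `⟨·,·⟩` is linear in its first argument, so `⟨Tx, x⟩` is
`inner x (T x)` in Mathlib's convention). -/
noncomputable def numericalRange {H : Type u} [NormedAddCommGroup H]
    [InnerProductSpace ℂ H] (T : H →L[ℂ] H) : Set ℂ :=
  {z : ℂ | ∃ v : H, ‖v‖ = 1 ∧ inner ℂ v (T v) = z}

/-- if for every operator `S` on a finite-dimensional complex Hilbert space with
numerical range contained in the interior of a compact convex set `Ω` (with nonempty interior)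
one has `‖q(S)‖ ≤ K · sup_Ω |q|` for all polynomials `q`, then the same bound holds for every
operator `T` on an arbitrary complex Hilbert space whose closure of the numerical range is
contained in the interior of `Ω`. -/
theorem stmt19 (Ω : Set ℂ) (hΩc : IsCompact Ω) (hΩconv : Convex ℝ Ω)
    (hΩint : (interior Ω).Nonempty) (K : ℝ) (hK : 0 < K)
    (hfin : ∀ (H' : Type u) [NormedAddCommGroup H'] [InnerProductSpace ℂ H']
      [FiniteDimensional ℂ H'] (S : H' →L[ℂ] H') (q : Polynomial ℂ),
      numericalRange S ⊆ interior Ω →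
      ‖(Polynomial.aeval S) q‖ ≤ K * sSup ((fun z => ‖Polynomial.eval z q‖) '' Ω))
    {H : Type u} [NormedAddCommGroup H] [InnerProductSpace ℂ H] [CompleteSpace H]
    (T : H →L[ℂ] H) (q : Polynomial ℂ)
    (hW : closure (numericalRange T) ⊆ interior Ω) :
    ‖(Polynomial.aeval T) q‖ ≤ K * sSup ((fun z => ‖Polynomial.eval z q‖) '' Ω) := by
  set C : ℝ := K * sSup ((fun z => ‖Polynomial.eval z q‖) '' Ω) with hC
  -- the sup is nonnegative
  have hΩne : Ω.Nonempty := hΩint.mono interior_subset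
  have hCnonneg : 0 ≤ C := by
    obtain ⟨z, hz⟩ := hΩne
    have hbdd : BddAbove ((fun z => ‖Polynomial.eval z q‖) '' Ω) :=
      (hΩc.image (continuous_norm.comp (Polynomial.continuous q))).bddAbove
    have : (0 : ℝ) ≤ ‖Polynomial.eval z q‖ := norm_nonneg _
    have hle : ‖Polynomial.eval z q‖
        ≤ sSup ((fun z => ‖Polynomial.eval z q‖) '' Ω) :=
      le_csSup hbdd ⟨z, hz, rfl⟩
    rw [hC]
    exact mul_nonneg hK.le (this.trans hle)
  refine ContinuousLinearMap.opNorm_le_bound _ hCnonneg fun x => ?_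
  -- the finite-dimensional compression subspace
  set d : ℕ := q.natDegree with hd
  set M : Submodule ℂ H := Submodule.span ℂ (Set.range fun k : Fin (d + 1) => (T ^ (k : ℕ)) x)
    with hM
  have hfd : FiniteDimensional ℂ M := FiniteDimensional.span_of_finite ℂ (Set.finite_range _)
  have hmem : ∀ k : ℕ, k ≤ d → (T ^ k) x ∈ M := fun k hk =>
    Submodule.subset_span ⟨⟨k, Nat.lt_succ_of_le hk⟩, rfl⟩
  have hxM : x ∈ M := by simpa using hmem 0 (Nat.zero_le _)
  set P : H →L[ℂ] M := M.orthogonalProjectionOnto with hP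
  set S : M →L[ℂ] M := P.comp (T.comp M.subtypeL) with hS
  set x' : M := ⟨x, hxM⟩ with hx'
  -- powers of S agree with powers of T on x
  have hpow : ∀ k : ℕ, k ≤ d → ((S ^ k) x' : H) = (T ^ k) x := by
    intro k hk
    induction k with
    | zero => simp [hx']
    | succ n ih =>
      have hn : n ≤ d := Nat.le_of_succ_le hk
      have ihn := ih hn
      rw [pow_succ', ContinuousLinearMap.mul_apply]
      have hTmem : T ((S ^ n) x' : H) ∈ M := by
        rw [ihn, ← ContinuousLinearMap.mul_apply, ← pow_succ']
        exact hmem (n + 1) hk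
      have : ((S ((S ^ n) x')) : H) = T ((S ^ n) x' : H) := by
        simp only [hS, ContinuousLinearMap.comp_apply, Submodule.subtypeL_apply, hP]
        exact (Submodule.starProjection_eq_self_iff (K := M)).mpr hTmem
      rw [this, ihn, ← ContinuousLinearMap.mul_apply, ← pow_succ']
  -- numerical range of S is inside interior Ω
  have hrange : numericalRange S ⊆ interior Ω := by
    rintro z ⟨v, hv1, hvz⟩
    apply hW
    apply subset_closure
    refine ⟨(v : H), by rwa [Submodule.norm_coe], ?_⟩
    rw [← hvz]
    have : (inner ℂ v (S v) : ℂ) = inner ℂ (v : H) (T (v : H)) := by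
      simp only [hS, ContinuousLinearMap.comp_apply, Submodule.subtypeL_apply, hP]
      rw [Submodule.inner_orthogonalProjectionOnto_eq_of_mem_left]
    rw [this]
  have hbound := hfin M S q hrange
  -- q(S) x' = q(T) x
  have hqeq : (((Polynomial.aeval S) q) x' : H) = ((Polynomial.aeval T) q) x := by
    rw [Polynomial.aeval_eq_sum_range (p := q) S, Polynomial.aeval_eq_sum_range (p := q) T]
    rw [ContinuousLinearMap.sum_apply, ContinuousLinearMap.sum_apply]
    rw [Submodule.coe_sum]
    refine Finset.sum_congr rfl fun i hi => ?_
    rw [ContinuousLinearMap.smul_apply, ContinuousLinearMap.smul_apply, Submodule.coe_smul]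
    rw [hpow i (Nat.lt_succ_iff.mp (Finset.mem_range.mp hi))]
  calc ‖((Polynomial.aeval T) q) x‖ = ‖((Polynomial.aeval S) q) x'‖ := by
        rw [← hqeq, Submodule.norm_coe]
    _ ≤ ‖(Polynomial.aeval S) q‖ * ‖x'‖ := ContinuousLinearMap.le_opNorm _ _
    _ ≤ C * ‖x'‖ := by
        apply mul_le_mul_of_nonneg_right hbound (norm_nonneg _)
    _ = C * ‖x‖ := by rw [hx']; congr 1
end
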